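/- arXiv:1510.07179 — 6 statements merged into one kernel-verified Lean document; each statement's English description precedes it below -/
import Mathlib

section
/- For every convex body K in R^d there exist ellipsoids E1 ⊆ K ⊆ E2 such that Vol(E2)/Vol(E1) ≤ C_d, where C_d = d^d depends only on d. -/
open Metric MeasureTheory Set

/-- An (affine) ellipsoid in `ℝ^d`: the image of the closed unit Euclidean ball
under an invertible affine map. -/
def IsEllipsoid {d : ℕ} (E : Set (EuclideanSpace ℝ (Fin d))) : Prop :=
  ∃ (L : EuclideanSpace ℝ (Fin d) ≃ₗ[ℝ] EuclideanSpace ℝ (Fin d))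
    (v : EuclideanSpace ℝ (Fin d)),
    E = (fun x => L x + v) '' closedBall 0 1

open Module
open scoped RealInnerProductSpace

set_option maxHeartbeats 1000000

lemma det_aux {d : ℕ} (hd : 1 ≤ d) (e : EuclideanSpace ℝ (Fin d)) (hne : ‖e‖ = 1)
    (a b : ℝ) :
    LinearMap.det (b • (LinearMap.id : EuclideanSpace ℝ (Fin d) →ₗ[ℝ] EuclideanSpace ℝ (Fin d))
      + (a - b) • LinearMap.smulRight (innerₛₗ ℝ e) e) = a * b ^ (d - 1) := by
  haveI : NeZero d := ⟨by omega⟩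
  obtain ⟨f, hf⟩ := Orthonormal.exists_orthonormalBasis_extension_of_card_eq
    (𝕜 := ℝ) (E := EuclideanSpace ℝ (Fin d)) (ι := Fin d)
    (by simp) (v := fun _ => e) (s := {0})
    (by
      constructor
      · intro i; simpa using hne
      · intro i j hij
        exact absurd (Subtype.ext ((i.2 : i.1 ∈ ({0}:Set (Fin d))).trans
          ((j.2 : j.1 ∈ ({0}:Set (Fin d)))).symm)) hij)
  have hf0 : f 0 = e := hf 0 rfl
  set T := b • (LinearMap.id : EuclideanSpace ℝ (Fin d) →ₗ[ℝ] EuclideanSpace ℝ (Fin d))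
      + (a - b) • LinearMap.smulRight (innerₛₗ ℝ e) e with hT
  rw [← LinearMap.det_toMatrix f.toBasis]
  have hmat : LinearMap.toMatrix f.toBasis f.toBasis T =
      Matrix.diagonal (fun i => if i = 0 then a else b) := by
    ext i j
    rw [LinearMap.toMatrix_apply, OrthonormalBasis.coe_toBasis,
      OrthonormalBasis.coe_toBasis_repr_apply, f.repr_apply_apply]
    have hTfj : T (f j) = b • f j + ((a-b) * ⟪e, f j⟫) • e := by
      simp [hT, smul_smul]
    rw [hTfj, inner_add_right, real_inner_smul_right, real_inner_smul_right]
    have horth : ∀ i j : Fin d, ⟪f i, f j⟫ = if i = j then 1 else 0 :=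
      fun i j => orthonormal_iff_ite.mp f.orthonormal i j
    have h1 : ⟪f i, f j⟫ = if i = j then 1 else 0 := horth i j
    have h2 : ⟪e, f j⟫ = if 0 = j then 1 else 0 := by rw [← hf0]; exact horth 0 j
    have h3 : ⟪f i, e⟫ = if i = 0 then 1 else 0 := by rw [← hf0]; exact horth i 0
    rw [h1, h2, h3, Matrix.diagonal_apply]
    rcases eq_or_ne i j with hij | hij
    · subst hij
      rcases eq_or_ne i 0 with hi0 | hi0
      · subst hi0; simp
      · simp [hi0, (Ne.symm hi0 : (0:Fin d) ≠ i)]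
    · rw [if_neg hij]
      rcases eq_or_ne i 0 with hi0 | hi0
      · subst hi0
        simp [hij]
      · simp [hij, hi0]
  rw [hmat, Matrix.det_diagonal]
  rw [← Finset.mul_prod_erase Finset.univ _ (Finset.mem_univ (0 : Fin d))]
  simp only [if_pos rfl]
  congr 1
  rw [Finset.prod_ite_of_false, Finset.prod_const, Finset.card_erase_of_mem (Finset.mem_univ _),
    Finset.card_univ, Fintype.card_fin]
  intro x hx
  simpa using (Finset.mem_erase.1 hx).1


lemma johns_core {d : ℕ} (hd : 1 ≤ d) {K' : Set (EuclideanSpace ℝ (Fin d))} (hconv : Convex ℝ K')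
    (hball : closedBall 0 1 ⊆ K') {q : EuclideanSpace ℝ (Fin d)} (hq : q ∈ K')
    (hs : (d : ℝ) < ‖q‖) :
    ∃ (T : EuclideanSpace ℝ (Fin d) →ₗ[ℝ] EuclideanSpace ℝ (Fin d))
      (v : EuclideanSpace ℝ (Fin d)),
      1 < LinearMap.det T ∧ ∀ x ∈ closedBall (0 : EuclideanSpace ℝ (Fin d)) 1, T x + v ∈ K' := by
  set s : ℝ := ‖q‖ with hs_def
  have hd1 : (1:ℝ) ≤ d := by exact_mod_cast hd
  have hs1 : (1:ℝ) < s := lt_of_le_of_lt hd1 hs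
  have hs1' : (0:ℝ) < s - 1 := by linarith
  have hs0 : (0:ℝ) < s := by linarith
  have hdpos : (0:ℝ) < d := by linarith
  -- parameters
  set c : ℝ := min ((s-1)/4) ((s-(d:ℝ))/(2*d)) with hc_def
  have hc0 : 0 < c := lt_min (by linarith) (div_pos (by linarith) (by positivity))
  have hc1 : c ≤ (s-1)/4 := min_le_left _ _
  have hc2 : 2*(d:ℝ)*c ≤ s - d := by
    have h : c ≤ (s-(d:ℝ))/(2*(d:ℝ)) := min_le_right _ _
    rw [le_div_iff₀ (by positivity)] at h
    linarith
  set m : ℝ := c / (s-1) with hm_def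
  have hm0 : 0 < m := div_pos hc0 hs1'
  have hcm : c = m * (s-1) := by rw [hm_def]; field_simp
  have hm14 : m ≤ 1/4 := by
    rw [hm_def, div_le_iff₀ hs1']; linarith
  have hkey : ((d:ℝ)-1)*(1+2*c) < s - 1 := by nlinarith
  have hkey2 : ((d:ℝ)-1)*m*(1+2*c) < c := by nlinarith
  have hdm : 2*((d:ℝ)-1)*m < 1 := by nlinarith
  set a : ℝ := 1 + c with ha_def
  have hb2pos : (0:ℝ) < 1 - 2*m := by linarith
  set b : ℝ := Real.sqrt (1 - 2*m) with hb_def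
  have hb0 : 0 < b := Real.sqrt_pos.2 hb2pos
  have hb2 : b^2 = 1 - 2*m := Real.sq_sqrt hb2pos.le
  have hb1 : b ≤ 1 := by nlinarith
  -- determinant value > 1
  have hdet_val : 1 < a * b^(d-1) := by
    have hBer : 1 - 2*((d:ℝ)-1)*m ≤ (1-2*m)^(d-1) := by
      have h2 : (-2:ℝ) ≤ -(2*m) := by linarith
      have hber := one_add_mul_le_pow h2 (d-1)
      have hcast : ((d-1 : ℕ):ℝ) = (d:ℝ)-1 := by
        rw [Nat.cast_sub hd]; norm_num
      rw [hcast] at hber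
      calc 1 - 2*((d:ℝ)-1)*m = 1 + ((d:ℝ)-1) * (-(2*m)) := by ring
        _ ≤ (1 + -(2*m))^(d-1) := hber
        _ = (1-2*m)^(d-1) := by rw [show (1:ℝ) + -(2*m) = 1 - 2*m by ring]
    have h2 : (0:ℝ) < 1 - 2*((d:ℝ)-1)*m := by linarith
    have hstep : (1+2*c) * (1 - 2*((d:ℝ)-1)*m) ≤ a^2 * (1-2*m)^(d-1) := by
      have h1 : (1+2*c) ≤ a^2 := by nlinarith
      exact mul_le_mul h1 hBer h2.le (by positivity)
    have hgt : 1 < (1+2*c) * (1 - 2*((d:ℝ)-1)*m) := by nlinarith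
    have hsq : 1 < (a * b^(d-1))^2 := by
      have hh : (a*b^(d-1))^2 = a^2 * (b^2)^(d-1) := by
        rw [mul_pow, ← pow_mul, ← pow_mul, Nat.mul_comm]
      rw [hh, hb2]; linarith
    have hpos : 0 < a * b^(d-1) := by positivity
    nlinarith
  -- the unit direction
  obtain ⟨e, hne, hqe⟩ : ∃ e : EuclideanSpace ℝ (Fin d), ‖e‖ = 1 ∧ q = s • e := by
    refine ⟨s⁻¹ • q, ?_, (smul_inv_smul₀ hs0.ne' q).symm⟩
    rw [norm_smul, norm_inv, Real.norm_eq_abs, abs_of_pos hs0, ← hs_def,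
      inv_mul_cancel₀ hs0.ne']
  have hee : ⟪e, e⟫ = 1 := by
    have := real_inner_self_eq_norm_sq e
    rw [hne] at this; rw [this]; norm_num
  -- the linear map
  refine ⟨b • LinearMap.id + (a - b) • LinearMap.smulRight (innerₛₗ ℝ e) e, c • e, ?_, ?_⟩
  · rw [det_aux hd e hne a b]; exact hdet_val
  · intro x hx
    rw [mem_closedBall, dist_zero_right] at hx
    set t : ℝ := ⟪e, x⟫ with ht_def
    have hT_apply : (b • (LinearMap.id :
        EuclideanSpace ℝ (Fin d) →ₗ[ℝ] EuclideanSpace ℝ (Fin d))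
        + (a - b) • LinearMap.smulRight (innerₛₗ ℝ e) e) x = b • x + ((a-b) * t) • e := by
      simp [smul_smul, ht_def]
    rw [hT_apply]
    have ht1 : |t| ≤ 1 := by
      have := abs_real_inner_le_norm e x
      rw [hne, one_mul] at this; linarith
    have ht1' : -1 ≤ t := neg_le_of_abs_le ht1
    have ht1'' : t ≤ 1 := le_of_abs_le ht1
    set μ : ℝ := m * (t + 1) with hμ_def
    have hμ0 : 0 ≤ μ := by nlinarith
    have hμ1 : μ ≤ 2*m := by nlinarith
    have hμlt : μ < 1 := by nlinarith
    have h1μ : 0 < 1 - μ := by linarith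
    -- the orthogonal part
    obtain ⟨w, hwe, hxw⟩ : ∃ w : EuclideanSpace ℝ (Fin d), ⟪e, w⟫ = 0 ∧ x = t • e + w := by
      refine ⟨x - t • e, ?_, by abel⟩
      rw [inner_sub_right, real_inner_smul_right, hee, ht_def]; ring
    have hnw : ‖w‖^2 ≤ 1 - t^2 := by
      have hx2 : ‖x‖^2 ≤ 1 := by nlinarith [norm_nonneg x]
      have hpyth : ‖x‖^2 = t^2 + ‖w‖^2 := by
        rw [hxw, norm_add_sq_real, real_inner_smul_left, hwe, norm_smul,
          Real.norm_eq_abs, hne]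
        rw [mul_one, ← sq_abs t]; ring
      linarith
    -- the key identity
    have hid : (a*t + c - μ*s)^2 + b^2*(1-t^2) = (1-μ)^2 := by
      have h1 : a*t + c - μ*s = (1-m)*t - m := by
        rw [ha_def, hμ_def, hcm]; ring
      rw [h1, hb2, hμ_def]; ring
    -- the point z on the unit ball
    have hnu : ‖(a*t + c - μ*s) • e + b • w‖ ≤ 1 - μ := by
      have hnorm1 : ‖(a*t + c - μ*s) • e‖^2 = (a*t + c - μ*s)^2 := by
        rw [norm_smul, Real.norm_eq_abs, hne, mul_one, sq_abs]
      have hnorm2 : ‖b • w‖^2 = b^2 * ‖w‖^2 := by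
        rw [norm_smul, mul_pow, Real.norm_eq_abs, sq_abs]
      have hinner : ⟪(a*t + c - μ*s) • e, b • w⟫ = 0 := by
        rw [real_inner_smul_left, real_inner_smul_right, hwe]; ring
      have h2 : ‖(a*t + c - μ*s) • e + b • w‖^2 = (a*t + c - μ*s)^2 + b^2*‖w‖^2 := by
        rw [norm_add_sq_real, hinner, hnorm1, hnorm2]; ring
      have h4 : b^2*‖w‖^2 ≤ b^2*(1-t^2) := mul_le_mul_of_nonneg_left hnw (sq_nonneg b)
      have h3 : ‖(a*t + c - μ*s) • e + b • w‖^2 ≤ (1-μ)^2 := by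
        rw [h2]; linarith [hid]
      exact (abs_le_of_sq_le_sq' h3 h1μ.le).2
    obtain ⟨z, hz1, hzu⟩ : ∃ z : EuclideanSpace ℝ (Fin d), ‖z‖ ≤ 1 ∧
        (1-μ) • z = (a*t + c - μ*s) • e + b • w := by
      refine ⟨(1-μ)⁻¹ • ((a*t + c - μ*s) • e + b • w), ?_, smul_inv_smul₀ h1μ.ne' _⟩
      rw [norm_smul, norm_inv, Real.norm_eq_abs, abs_of_pos h1μ, inv_mul_le_iff₀ h1μ, mul_one]
      exact hnu
    have hzball : z ∈ closedBall (0 : EuclideanSpace ℝ (Fin d)) 1 := by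
      rw [mem_closedBall, dist_zero_right]; exact hz1
    have hcomb : b • x + ((a-b) * t) • e + c • e = μ • q + (1-μ) • z := by
      rw [hzu, hqe, hxw, smul_smul]
      module
    rw [hcomb]
    exact hconv hq (hball hzball) hμ0 h1μ.le (by ring)


lemma vol_translate {d : ℕ} (v : EuclideanSpace ℝ (Fin d)) (s : Set (EuclideanSpace ℝ (Fin d))) :
    volume ((fun x => x + v) '' s) = volume s := by
  simp [Set.image_add_right]

lemma vol_ell {d : ℕ} (L : EuclideanSpace ℝ (Fin d) ≃ₗ[ℝ] EuclideanSpace ℝ (Fin d))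
    (v : EuclideanSpace ℝ (Fin d)) :
    volume ((fun x => L x + v) '' closedBall 0 1) =
      ENNReal.ofReal |LinearMap.det (L : EuclideanSpace ℝ (Fin d) →ₗ[ℝ] EuclideanSpace ℝ (Fin d))|
        * volume (closedBall (0 : EuclideanSpace ℝ (Fin d)) 1) := by
  have h1 : (fun x => L x + v) '' closedBall 0 1 =
      (fun y => y + v) ''
        ((L : EuclideanSpace ℝ (Fin d) →ₗ[ℝ] EuclideanSpace ℝ (Fin d)) '' closedBall 0 1) := by
    rw [Set.image_image]; rfl
  rw [h1, vol_translate, Measure.addHaar_image_linearMap]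

/-- John's theorem (weak form): every convex body `K ⊆ ℝ^d` is squeezed between
two ellipsoids whose volume ratio is at most `d^d`. -/
theorem johns_theorem {d : ℕ} (hd : 1 ≤ d) (K : Set (EuclideanSpace ℝ (Fin d)))
    (hKcpt : IsCompact K) (hKconv : Convex ℝ K) (hKint : (interior K).Nonempty) :
    ∃ E₁ E₂ : Set (EuclideanSpace ℝ (Fin d)), IsEllipsoid E₁ ∧ IsEllipsoid E₂ ∧
      E₁ ⊆ K ∧ K ⊆ E₂ ∧ volume E₂ ≤ (d : ENNReal) ^ d * volume E₁ := by
  classical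
  have hd0 : (0:ℝ) < d := by exact_mod_cast Nat.lt_of_lt_of_le Nat.zero_lt_one hd
  -- bound on K
  obtain ⟨R, hR0, hKR⟩ : ∃ R : ℝ, 0 < R ∧ K ⊆ closedBall 0 R := by
    obtain ⟨R, hKR⟩ := hKcpt.isBounded.subset_closedBall 0
    exact ⟨max R 1, lt_of_lt_of_le one_pos (le_max_right _ _),
      hKR.trans (closedBall_subset_closedBall (le_max_left _ _))⟩
  -- the admissible set
  set S : Set ((EuclideanSpace ℝ (Fin d) →L[ℝ] EuclideanSpace ℝ (Fin d))
      × EuclideanSpace ℝ (Fin d)) :=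
    {p | ∀ x ∈ closedBall (0 : EuclideanSpace ℝ (Fin d)) 1, p.1 x + p.2 ∈ K} with hS_def
  have hSclosed : IsClosed S := by
    have hrw : S = ⋂ x ∈ closedBall (0 : EuclideanSpace ℝ (Fin d)) 1,
        {p : (EuclideanSpace ℝ (Fin d) →L[ℝ] EuclideanSpace ℝ (Fin d))
          × EuclideanSpace ℝ (Fin d) | p.1 x + p.2 ∈ K} := by
      ext p; simp [hS_def]
    rw [hrw]
    exact isClosed_biInter fun x _ => hKcpt.isClosed.preimage
      ((continuous_fst.clm_apply continuous_const).add continuous_snd)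
  have hSsub : S ⊆ closedBall 0 (2*R) ×ˢ closedBall 0 R := by
    intro p hp
    have hv : p.2 ∈ K := by simpa using hp 0 (by simp)
    have hvR : ‖p.2‖ ≤ R := by
      have := hKR hv; rwa [mem_closedBall, dist_zero_right] at this
    refine ⟨?_, ?_⟩
    · rw [mem_closedBall, dist_zero_right]
      refine ContinuousLinearMap.opNorm_le_of_unit_norm (by linarith) fun x hx => ?_
      have hmem := hp x (by rw [mem_closedBall, dist_zero_right, hx])
      have hR' : ‖p.1 x + p.2‖ ≤ R := by
        have := hKR hmem; rwa [mem_closedBall, dist_zero_right] at this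
      have heq : p.1 x = (p.1 x + p.2) - p.2 := by abel
      calc ‖p.1 x‖ = ‖(p.1 x + p.2) - p.2‖ := by rw [← heq]
        _ ≤ ‖p.1 x + p.2‖ + ‖p.2‖ := norm_sub_le _ _
        _ ≤ 2*R := by linarith
    · rw [mem_closedBall, dist_zero_right]; exact hvR
  have hScompact : IsCompact S :=
    ((isCompact_closedBall _ _).prod (isCompact_closedBall _ _)).of_isClosed_subset
      hSclosed hSsub
  -- a starting point
  obtain ⟨x₀, hx₀⟩ := hKint
  obtain ⟨r, hr0, hrball⟩ := Metric.isOpen_iff.mp isOpen_interior x₀ hx₀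
  have hrK : ball x₀ r ⊆ K := hrball.trans interior_subset
  set p₀ : (EuclideanSpace ℝ (Fin d) →L[ℝ] EuclideanSpace ℝ (Fin d))
      × EuclideanSpace ℝ (Fin d) :=
    ((r/2) • ContinuousLinearMap.id ℝ (EuclideanSpace ℝ (Fin d)), x₀) with hp₀_def
  have hp₀ : p₀ ∈ S := by
    intro x hx
    rw [mem_closedBall, dist_zero_right] at hx
    apply hrK
    rw [mem_ball, dist_eq_norm]
    have : ((r/2) • ContinuousLinearMap.id ℝ (EuclideanSpace ℝ (Fin d))) x + x₀ - x₀
        = (r/2) • x := by simp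
    rw [hp₀_def, this, norm_smul, Real.norm_eq_abs, abs_of_pos (by linarith)]
    nlinarith
  -- maximize |det|
  set g : ((EuclideanSpace ℝ (Fin d) →L[ℝ] EuclideanSpace ℝ (Fin d))
      × EuclideanSpace ℝ (Fin d)) → ℝ := fun p => |ContinuousLinearMap.det p.1| with hg_def
  have hgcont : Continuous g := (ContinuousLinearMap.continuous_det.comp continuous_fst).abs
  obtain ⟨pm, hpmS, hmax⟩ := hScompact.exists_isMaxOn ⟨p₀, hp₀⟩ hgcont.continuousOn
  obtain ⟨T₀, v₀⟩ := pm
  have hp₀det : g p₀ = (r/2)^d := by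
    rw [hg_def, hp₀_def]
    show |ContinuousLinearMap.det ((r/2) • ContinuousLinearMap.id ℝ (EuclideanSpace ℝ (Fin d)))| = _
    rw [ContinuousLinearMap.det]
    rw [ContinuousLinearMap.coe_smul, ContinuousLinearMap.coe_id, LinearMap.det_smul,
      LinearMap.det_id, finrank_euclideanSpace_fin, mul_one, abs_pow,
      abs_of_pos (by linarith : (0:ℝ) < r/2)]
  have hdet0 : LinearMap.det
      ((T₀ : EuclideanSpace ℝ (Fin d) →ₗ[ℝ] EuclideanSpace ℝ (Fin d))) ≠ 0 := by
    intro h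
    have h1 : g p₀ ≤ g (T₀, v₀) := hmax hp₀
    rw [hp₀det] at h1
    have : g (T₀, v₀) = 0 := by rw [hg_def]; show |ContinuousLinearMap.det T₀| = 0; rw [ContinuousLinearMap.det, h, abs_zero]
    rw [this] at h1
    nlinarith [pow_pos (by linarith : (0:ℝ) < r/2) d]
  -- the inner ellipsoid
  set L₁ := LinearMap.equivOfDetNeZero _ hdet0 with hL₁_def
  have hL₁coe : (L₁ : EuclideanSpace ℝ (Fin d) →ₗ[ℝ] EuclideanSpace ℝ (Fin d))
      = (T₀ : EuclideanSpace ℝ (Fin d) →ₗ[ℝ] EuclideanSpace ℝ (Fin d)) :=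
    LinearEquiv.coe_ofIsUnitDet _
  have hL₁app : ∀ x, L₁ x = T₀ x := fun x => by
    have h := DFunLike.congr_fun hL₁coe x
    simpa using h
  -- the outer linear map
  have hdet₂val : LinearMap.det ((d:ℝ) • (T₀ : EuclideanSpace ℝ (Fin d) →ₗ[ℝ]
      EuclideanSpace ℝ (Fin d))) = (d:ℝ)^d * LinearMap.det
        ((T₀ : EuclideanSpace ℝ (Fin d) →ₗ[ℝ] EuclideanSpace ℝ (Fin d))) := by
    rw [LinearMap.det_smul, finrank_euclideanSpace_fin]
  have hdet₂0 : LinearMap.det ((d:ℝ) • (T₀ : EuclideanSpace ℝ (Fin d) →ₗ[ℝ]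
      EuclideanSpace ℝ (Fin d))) ≠ 0 := by
    rw [hdet₂val]
    exact mul_ne_zero (by positivity) hdet0
  set L₂ := LinearMap.equivOfDetNeZero _ hdet₂0 with hL₂_def
  have hL₂coe : (L₂ : EuclideanSpace ℝ (Fin d) →ₗ[ℝ] EuclideanSpace ℝ (Fin d))
      = (d:ℝ) • (T₀ : EuclideanSpace ℝ (Fin d) →ₗ[ℝ] EuclideanSpace ℝ (Fin d)) :=
    LinearEquiv.coe_ofIsUnitDet _
  have hL₂app : ∀ x, L₂ x = (d:ℝ) • T₀ x := fun x => by
    have h := DFunLike.congr_fun hL₂coe x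
    simpa using h
  refine ⟨(fun x => L₁ x + v₀) '' closedBall 0 1, (fun x => L₂ x + v₀) '' closedBall 0 1,
    ⟨L₁, v₀, rfl⟩, ⟨L₂, v₀, rfl⟩, ?_, ?_, ?_⟩
  · -- E₁ ⊆ K
    rintro _ ⟨x, hx, rfl⟩
    show L₁ x + v₀ ∈ K
    rw [hL₁app]
    exact hpmS x hx
  · -- K ⊆ E₂
    intro p hp
    by_contra hpE
    set q := L₁.symm (p - v₀) with hq_def
    have hq_img : T₀ q + v₀ = p := by
      rw [← hL₁app, hq_def, L₁.apply_symm_apply]; abel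
    have hqd : (d:ℝ) < ‖q‖ := by
      by_contra hle
      push_neg at hle
      apply hpE
      refine ⟨(d:ℝ)⁻¹ • q, ?_, ?_⟩
      · rw [mem_closedBall, dist_zero_right, norm_smul, norm_inv, Real.norm_eq_abs,
          abs_of_pos hd0, inv_mul_le_iff₀ hd0, mul_one]
        exact hle
      · show L₂ ((d:ℝ)⁻¹ • q) + v₀ = p
        rw [hL₂app, T₀.map_smul, smul_inv_smul₀ (ne_of_gt hd0), hq_img]
    have hK'conv : Convex ℝ {y | T₀ y + v₀ ∈ K} := by
      intro x hx y hy α β hα hβ hαβ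
      show T₀ (α • x + β • y) + v₀ ∈ K
      have hv : α • v₀ + β • v₀ = v₀ := by rw [← add_smul, hαβ, one_smul]
      have heq : T₀ (α • x + β • y) + v₀ = α • (T₀ x + v₀) + β • (T₀ y + v₀) := by
        rw [map_add, T₀.map_smul, T₀.map_smul, smul_add, smul_add]
        conv_lhs => rw [← hv]
        abel
      rw [heq]
      exact hKconv hx hy hα hβ hαβ
    have hball' : closedBall 0 1 ⊆ {y | T₀ y + v₀ ∈ K} := fun x hx => hpmS x hx
    have hq' : q ∈ {y | T₀ y + v₀ ∈ K} := by show T₀ q + v₀ ∈ K; rw [hq_img]; exact hp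
    obtain ⟨T₁, v₁, hT₁det, hT₁mem⟩ := johns_core hd hK'conv hball' hq' hqd
    set T₁c := LinearMap.toContinuousLinearMap T₁ with hT₁c_def
    have hT₁capp : ∀ x, T₁c x = T₁ x := fun x => by
      rw [hT₁c_def, LinearMap.coe_toContinuousLinearMap']
    have hmemS : (T₀.comp T₁c, T₀ v₁ + v₀) ∈ S := by
      intro x hx
      have h := hT₁mem x hx
      show T₀ (T₁c x) + (T₀ v₁ + v₀) ∈ K
      have heq : T₀ (T₁c x) + (T₀ v₁ + v₀) = T₀ (T₁ x + v₁) + v₀ := by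
        rw [map_add, hT₁capp]; abel
      rw [heq]
      exact h
    have hgle := hmax hmemS
    have hcomp : ContinuousLinearMap.det (T₀.comp T₁c) =
        LinearMap.det ((T₀ : EuclideanSpace ℝ (Fin d) →ₗ[ℝ] EuclideanSpace ℝ (Fin d)))
          * LinearMap.det T₁ := by
      rw [ContinuousLinearMap.det, ContinuousLinearMap.toLinearMap_comp, LinearMap.det_comp,
        hT₁c_def, LinearMap.coe_toContinuousLinearMap]
    have habs0 : 0 < |LinearMap.det ((T₀ : EuclideanSpace ℝ (Fin d) →ₗ[ℝ]
        EuclideanSpace ℝ (Fin d)))| := abs_pos.2 hdet0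
    have : g (T₀.comp T₁c, T₀ v₁ + v₀) > g (T₀, v₀) := by
      rw [hg_def]
      show |ContinuousLinearMap.det (T₀.comp T₁c)| > |ContinuousLinearMap.det T₀|
      rw [hcomp, abs_mul, ContinuousLinearMap.det]
      nlinarith [le_abs_self (LinearMap.det T₁)]
    exact absurd hgle (not_le.2 this)
  · -- volume estimate
    rw [vol_ell L₁ v₀, vol_ell L₂ v₀, hL₁coe, hL₂coe, hdet₂val, abs_mul,
      abs_of_pos (by positivity : (0:ℝ) < (d:ℝ)^d), ENNReal.ofReal_mul (by positivity),
      ENNReal.ofReal_pow (by positivity : (0:ℝ) ≤ (d:ℝ)), ENNReal.ofReal_natCast, mul_assoc]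
end

section
/- For every s > 0, the set of Danzer sets with volume parameter s is closed in the space X of closed subsets of R^d with the Chabauty-Fell topology. -/
open Metric Set Filter MeasureTheory

/-- A convex set of positive volume has nonempty interior. -/
lemma danzer_aux_interior {d : ℕ} {K : Set (EuclideanSpace ℝ (Fin d))}
    (hK : Convex ℝ K) (h0 : volume K ≠ 0) : (interior K).Nonempty := by
  by_contra hemp
  rw [not_nonempty_iff_eq_empty] at hemp
  have hspan : affineSpan ℝ K ≠ ⊤ := fun htop => by
    have := hK.interior_nonempty_iff_affineSpan_eq_top.2 htop
    rw [hemp] at this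
    exact not_nonempty_empty this
  exact h0 (measure_mono_null (subset_affineSpan ℝ K)
    (MeasureTheory.Measure.addHaar_affineSubspace _ _ hspan))

/-- A closed convex set of finite volume containing a ball is bounded. -/
lemma danzer_aux_bounded {d : ℕ} {K : Set (EuclideanSpace ℝ (Fin d))}
    (hKc : IsClosed K) (hK : Convex ℝ K) {x : EuclideanSpace ℝ (Fin d)} {r : ℝ}
    (hr : 0 < r) (hball : ball x r ⊆ K) (hfin : volume K ≠ ⊤) :
    Bornology.IsBounded K := by
  by_contra hub
  have hv : 0 < volume (ball (0 : EuclideanSpace ℝ (Fin d)) (r/2)) :=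
    measure_ball_pos _ _ (by linarith)
  -- the tail of K has small measure
  have htend : Tendsto (fun n : ℕ => volume (K \ closedBall 0 n)) atTop
      (nhds (volume (⋂ n : ℕ, K \ closedBall 0 n))) :=
    tendsto_measure_iInter_atTop
      (fun n => (hKc.measurableSet.diff measurableSet_closedBall).nullMeasurableSet)
      (fun m n hmn => diff_subset_diff_right (closedBall_subset_closedBall (by exact_mod_cast hmn)))
      ⟨0, ne_top_of_le_ne_top hfin (measure_mono diff_subset)⟩
  have hiInter : (⋂ n : ℕ, K \ closedBall 0 n) = ∅ := by
    apply eq_empty_iff_forall_notMem.2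
    intro y hy
    obtain ⟨n, hn⟩ := exists_nat_ge ‖y‖
    exact (mem_iInter.1 hy n).2 (by simp only [mem_closedBall, dist_zero_right]; exact hn)
  rw [hiInter, measure_empty] at htend
  obtain ⟨R, hR⟩ : ∃ R : ℕ, volume (K \ closedBall 0 R) <
      volume (ball (0 : EuclideanSpace ℝ (Fin d)) (r/2)) :=
    (htend.eventually_lt_const hv).exists
  -- pick a far away point of K
  rw [isBounded_iff_forall_norm_le] at hub
  push_neg at hub
  obtain ⟨k, hkK, hk⟩ := hub (2*(R + r/2) + ‖x‖)
  set c : EuclideanSpace ℝ (Fin d) := (2⁻¹ : ℝ) • (x + k) with hc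
  have h2c : (2:ℝ) • c = x + k := by rw [hc, smul_smul]; norm_num
  have hn2 : ‖(2:ℝ)‖ = 2 := by norm_num
  -- ball c (r/2) ⊆ K
  have hsubK : ball c (r/2) ⊆ K := by
    intro z hz
    have hx' : (2:ℝ) • z - k ∈ ball x r := by
      rw [mem_ball, dist_eq_norm] at hz ⊢
      have he : (2:ℝ) • z - k - x = (2:ℝ) • (z - c) := by rw [smul_sub, h2c]; abel
      rw [he, norm_smul, hn2]
      linarith
    have := hK (hball hx') hkK (by norm_num : (0:ℝ) ≤ 1/2) (by norm_num : (0:ℝ) ≤ 1/2)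
      (by norm_num)
    convert this using 1
    module
  -- ball c (r/2) misses closedBall 0 R
  have hfar : ball c (r/2) ⊆ K \ closedBall 0 R := by
    intro z hz
    refine ⟨hsubK hz, ?_⟩
    simp only [mem_closedBall, dist_zero_right, not_le]
    have h1 : ‖k‖ ≤ 2 * ‖c‖ + ‖x‖ := by
      have hceq : ‖x + k‖ = 2 * ‖c‖ := by rw [← h2c, norm_smul, hn2]
      have h2 : ‖k‖ - ‖x‖ ≤ ‖x + k‖ := by
        have := norm_sub_norm_le k (-x)
        simpa [sub_neg_eq_add, add_comm] using this
      linarith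
    have h3 : ‖c - z‖ < r/2 := by rw [mem_ball, dist_eq_norm] at hz; rw [norm_sub_rev]; linarith [hz]
    have h4 : ‖c‖ - ‖z‖ ≤ ‖c - z‖ := norm_sub_norm_le c z
    linarith
  exact absurd (measure_mono hfar) (not_le.2 (lt_of_lt_of_le hR
    (le_of_eq (MeasureTheory.Measure.addHaar_ball_center volume c (r/2)).symm)))

/-- The Chabauty–Fell distance on subsets of `ℝ^d`. -/
noncomputable def CF {d : ℕ} (F₁ F₂ : Set (EuclideanSpace ℝ (Fin d))) : ℝ :=
  sInf ({ε : ℝ | 0 < ε ∧ F₁ ∩ ball 0 (1/ε) ⊆ thickening ε F₂ ∧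
      F₂ ∩ ball 0 (1/ε) ⊆ thickening ε F₁} ∪ {1})

/-- The set of Danzer sets with volume parameter `s` (closed sets intersecting every closed
convex set of volume `s`) is closed in the Chabauty–Fell topology (sequential form). -/
theorem danzer_sets_closed {d : ℕ} (s : ℝ) (hs : 0 < s)
    (Y : ℕ → Set (EuclideanSpace ℝ (Fin d))) (hYc : ∀ n, IsClosed (Y n))
    (hYD : ∀ n, ∀ K : Set (EuclideanSpace ℝ (Fin d)), IsClosed K → Convex ℝ K →
      volume K = ENNReal.ofReal s → (K ∩ Y n).Nonempty)
    (L : Set (EuclideanSpace ℝ (Fin d))) (hL : IsClosed L)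
    (h : Tendsto (fun n => CF (Y n) L) atTop (nhds 0)) :
    ∀ K : Set (EuclideanSpace ℝ (Fin d)), IsClosed K → Convex ℝ K →
      volume K = ENNReal.ofReal s → (K ∩ L).Nonempty := by
  intro K hKc hKconv hKvol
  have h0 : volume K ≠ 0 := by
    rw [hKvol]
    simpa using hs
  have hfin : volume K ≠ ⊤ := by rw [hKvol]; exact ENNReal.ofReal_ne_top
  obtain ⟨x, hx⟩ := danzer_aux_interior hKconv h0
  obtain ⟨r, hr, hball⟩ := Metric.isOpen_iff.1 isOpen_interior x hx
  have hbdd := danzer_aux_bounded hKc hKconv hr (hball.trans interior_subset) hfin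
  have hKcpt : IsCompact K := Metric.isCompact_of_isClosed_isBounded hKc hbdd
  obtain ⟨C, hC⟩ := isBounded_iff_forall_norm_le.1 hbdd
  set R : ℝ := max C 0 with hRdef
  have hR0 : 0 ≤ R := le_max_right _ _
  by_contra hne
  rw [not_nonempty_iff_eq_empty] at hne
  have hdisjKL : Disjoint K L := disjoint_iff_inter_eq_empty.2 hne
  obtain ⟨δ, hδ, hdisj⟩ := hdisjKL.exists_thickenings hKcpt hL
  set c : ℝ := min δ (min (1/(R+1)) 1) with hcdef
  have hc0 : 0 < c := lt_min hδ (lt_min (by positivity) one_pos)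
  obtain ⟨n, hn⟩ := (h.eventually_lt_const hc0).exists
  have hSne : ({ε : ℝ | 0 < ε ∧ Y n ∩ ball 0 (1/ε) ⊆ thickening ε L ∧
      L ∩ ball 0 (1/ε) ⊆ thickening ε (Y n)} ∪ {1}).Nonempty := ⟨1, Or.inr rfl⟩
  obtain ⟨ε', hε'mem, hε'lt⟩ := exists_lt_of_csInf_lt hSne hn
  have hc1 : c ≤ 1 := (min_le_right _ _).trans (min_le_right _ _)
  rcases hε'mem with hε'mem | hε'eq
  · obtain ⟨hε'0, hsub, -⟩ := hε'mem
    obtain ⟨y, hyK, hyY⟩ := hYD n K hKc hKconv hKvol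
    have hydist : y ∈ ball (0 : EuclideanSpace ℝ (Fin d)) (1/ε') := by
      rw [mem_ball_zero_iff]
      have h1 : ε' < 1/(R+1) := hε'lt.trans_le ((min_le_right _ _).trans (min_le_left _ _))
      have h2 : R + 1 < 1/ε' := by
        rw [lt_div_iff₀ hε'0]
        calc (R+1) * ε' < (R+1) * (1/(R+1)) := by
              apply mul_lt_mul_of_pos_left h1 (by positivity)
          _ = 1 := by field_simp
      have h3 : ‖y‖ ≤ R := (hC y hyK).trans (le_max_left _ _)
      linarith
    have hyL : y ∈ thickening δ L :=
      thickening_mono (hε'lt.trans_le (min_le_left _ _)).le L (hsub ⟨hyY, hydist⟩)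
    have hyK' : y ∈ thickening δ K := self_subset_thickening hδ K hyK
    exact Set.disjoint_left.1 hdisj hyK' hyL
  · rw [mem_singleton_iff] at hε'eq
    rw [hε'eq] at hε'lt
    linarith
end

section
/- If Y ⊆ R^d is closed and there exist ε, C > 0 such that every convex set K of volume ε satisfies #(K ∩ Y) ≤ C, then R^d does not belong to the closure of G.Y in the Chabauty-Fell topology, where G = SL_d(R) ⋉ R^d. -/
open Metric Set Filter MeasureTheory

/-- The affine action of `G = SL_d(ℝ) ⋉ ℝ^d` on `ℝ^d`: `(A, v).x = A x + v`. -/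
def affAct {d : ℕ} (g : Matrix.SpecialLinearGroup (Fin d) ℝ × EuclideanSpace ℝ (Fin d))
    (x : EuclideanSpace ℝ (Fin d)) : EuclideanSpace ℝ (Fin d) :=
  WithLp.toLp 2 (fun i => ((g.1 : Matrix (Fin d) (Fin d) ℝ).mulVec x) i + g.2 i)

lemma det_toEuclideanLin {d : ℕ} (M : Matrix (Fin d) (Fin d) ℝ) :
    LinearMap.det (Matrix.toEuclideanLin M) = M.det := by
  have : (Matrix.toEuclideanLin M : EuclideanSpace ℝ (Fin d) →ₗ[ℝ] EuclideanSpace ℝ (Fin d)) =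
      ((WithLp.linearEquiv 2 ℝ (Fin d → ℝ)).symm : (Fin d → ℝ) ≃ₗ[ℝ] _).toLinearMap ∘ₗ
        Matrix.toLin' M ∘ₗ ((WithLp.linearEquiv 2 ℝ (Fin d → ℝ)).symm.symm :
          EuclideanSpace ℝ (Fin d) ≃ₗ[ℝ] (Fin d → ℝ)).toLinearMap := rfl
  rw [this, LinearMap.det_conj, LinearMap.det_toLin']

lemma affAct_eq {d : ℕ} (g : Matrix.SpecialLinearGroup (Fin d) ℝ × EuclideanSpace ℝ (Fin d)) :
    affAct g = fun x => Matrix.toEuclideanLin (g.1 : Matrix (Fin d) (Fin d) ℝ) x + g.2 := rfl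

lemma affAct_injective {d : ℕ}
    (g : Matrix.SpecialLinearGroup (Fin d) ℝ × EuclideanSpace ℝ (Fin d)) :
    Function.Injective (affAct g) := by
  intro x y hxy
  rw [affAct_eq] at hxy
  have h2 : Matrix.toEuclideanLin (g.1 : Matrix (Fin d) (Fin d) ℝ) x =
      Matrix.toEuclideanLin (g.1 : Matrix (Fin d) (Fin d) ℝ) y := by
    have := congrArg (fun z => z - g.2) hxy
    simpa using this
  have hdet : LinearMap.det (Matrix.toEuclideanLin (g.1 : Matrix (Fin d) (Fin d) ℝ)) ≠ 0 := by
    rw [det_toEuclideanLin, g.1.2]; norm_num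
  exact (LinearMap.equivOfDetNeZero _ hdet).injective h2

/-- Volume is preserved by `affAct`. -/
lemma volume_affAct_preimage {d : ℕ}
    (g : Matrix.SpecialLinearGroup (Fin d) ℝ × EuclideanSpace ℝ (Fin d))
    (K : Set (EuclideanSpace ℝ (Fin d))) :
    volume (affAct g ⁻¹' K) = volume K := by
  have hpre : affAct g ⁻¹' K =
      (Matrix.toEuclideanLin (g.1 : Matrix (Fin d) (Fin d) ℝ)) ⁻¹'
        ((fun y => y + g.2) ⁻¹' K) := by
    rw [affAct_eq]; rfl
  have hdet : LinearMap.det (Matrix.toEuclideanLin (g.1 : Matrix (Fin d) (Fin d) ℝ)) ≠ 0 := by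
    rw [det_toEuclideanLin, g.1.2]; norm_num
  rw [hpre, MeasureTheory.Measure.addHaar_preimage_linearMap volume hdet,
    measure_preimage_add_right volume g.2, det_toEuclideanLin, g.1.2]
  norm_num

lemma convex_affAct_preimage {d : ℕ}
    (g : Matrix.SpecialLinearGroup (Fin d) ℝ × EuclideanSpace ℝ (Fin d))
    {K : Set (EuclideanSpace ℝ (Fin d))} (hK : Convex ℝ K) :
    Convex ℝ (affAct g ⁻¹' K) := by
  have hpre : affAct g ⁻¹' K =
      (Matrix.toEuclideanLin (g.1 : Matrix (Fin d) (Fin d) ℝ)) ⁻¹'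
        ((fun y => g.2 + y) ⁻¹' K) := by
    rw [affAct_eq]
    ext x
    simp [add_comm]
  rw [hpre]
  exact (hK.translate_preimage_right g.2).linear_preimage _

/-- If at most `C` points of `Y` lie in any convex set of volume `ε`, then `ℝ^d` is not in
the closure of the `SL_d(ℝ) ⋉ ℝ^d`-orbit of `Y` in the Chabauty–Fell topology. -/
theorem univ_not_in_orbit_closure {d : ℕ} (hd : 1 ≤ d)
    (Y : Set (EuclideanSpace ℝ (Fin d))) (hY : IsClosed Y) (ε : ℝ) (C : ℕ)
    (hε : 0 < ε) (hC : 0 < C)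
    (h : ∀ K : Set (EuclideanSpace ℝ (Fin d)), Convex ℝ K →
      volume K = ENNReal.ofReal ε → (K ∩ Y).encard ≤ C) :
    ¬ ∃ g : ℕ → Matrix.SpecialLinearGroup (Fin d) ℝ × EuclideanSpace ℝ (Fin d),
      Tendsto (fun n => CF (affAct (g n) '' Y) (univ : Set (EuclideanSpace ℝ (Fin d))))
        atTop (nhds 0) := by
  rintro ⟨g, hg⟩
  haveI : Nonempty (Fin d) := ⟨⟨0, hd⟩⟩
  -- the radius of a ball of volume ε
  set c : ℝ := Real.sqrt Real.pi ^ d / Real.Gamma (d / 2 + 1) with hc_def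
  have hc : 0 < c := by
    apply div_pos (pow_pos (Real.sqrt_pos.mpr Real.pi_pos) d)
    apply Real.Gamma_pos_of_pos
    positivity
  set r : ℝ := (ε / c) ^ ((d : ℝ)⁻¹) with hr_def
  have hr : 0 < r := Real.rpow_pos_of_pos (div_pos hε hc) _
  have hdne : (d : ℝ) ≠ 0 := Nat.cast_ne_zero.mpr (by omega)
  have hrd : r ^ d = ε / c := by
    rw [hr_def, ← Real.rpow_natCast ((ε / c) ^ ((d : ℝ)⁻¹)) d,
      ← Real.rpow_mul (div_pos hε hc).le, inv_mul_cancel₀ hdne, Real.rpow_one]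
  -- the ball of volume ε
  have hKvol : volume (closedBall (0 : EuclideanSpace ℝ (Fin d)) r) = ENNReal.ofReal ε := by
    rw [EuclideanSpace.volume_closedBall, Fintype.card_fin,
      ← ENNReal.ofReal_pow hr.le, ← ENNReal.ofReal_mul (by positivity), hrd,
      div_mul_cancel₀ _ hc.ne']
  -- the bound transfers to all affine images of Y
  have hF : ∀ n : ℕ,
      (closedBall (0 : EuclideanSpace ℝ (Fin d)) r ∩ affAct (g n) '' Y).encard ≤ C := by
    intro n
    have hinter : closedBall (0 : EuclideanSpace ℝ (Fin d)) r ∩ affAct (g n) '' Y =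
        affAct (g n) '' (affAct (g n) ⁻¹' closedBall 0 r ∩ Y) := by
      rw [Set.image_preimage_inter]
    rw [hinter, (affAct_injective (g n)).encard_image _]
    exact h _ (convex_affAct_preimage (g n) (convex_closedBall _ _))
      (by rw [volume_affAct_preimage, hKvol])
  -- choose δ
  set δ : ℝ := min r 1 / (3 * C + 4) with hδ_def
  have hden : (0 : ℝ) < 3 * C + 4 := by positivity
  have hδ : 0 < δ := div_pos (lt_min hr one_pos) hden
  have hδr : δ * (3 * C + 4) = min r 1 := div_mul_cancel₀ _ hden.ne'
  have hδ1 : δ * (3 * C + 4) ≤ 1 := by rw [hδr]; exact min_le_right _ _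
  have hδle1 : δ ≤ 1 := by nlinarith
  -- get n with small CF
  obtain ⟨n, hn⟩ := (hg.eventually (gt_mem_nhds hδ)).exists
  -- extract a witness ε' < δ from the infimum
  have hne : ({a : ℝ | 0 < a ∧ (affAct (g n) '' Y) ∩ ball 0 (1/a) ⊆
      thickening a (univ : Set (EuclideanSpace ℝ (Fin d))) ∧
      (univ : Set (EuclideanSpace ℝ (Fin d))) ∩ ball 0 (1/a) ⊆
        thickening a (affAct (g n) '' Y)} ∪ {1}).Nonempty := ⟨1, Or.inr rfl⟩
  obtain ⟨a, ha, haδ⟩ := exists_lt_of_csInf_lt hne hn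
  have hδlt1 : δ < 1 := by
    nlinarith [min_le_right r 1]
  rcases ha with ha | ha
  swap
  · simp only [Set.mem_singleton_iff] at ha
    subst ha
    linarith
  obtain ⟨ha0, _, hcov⟩ := ha
  -- construct C+1 points of (affAct (g n) '' Y) in the ball
  set u : EuclideanSpace ℝ (Fin d) := EuclideanSpace.single (⟨0, hd⟩ : Fin d) (1 : ℝ) with hu_def
  have hu : ‖u‖ = 1 := by rw [hu_def, EuclideanSpace.norm_single]; norm_num
  set p : Fin (C + 1) → EuclideanSpace ℝ (Fin d) :=
    fun i => ((3 * δ) * ((i : ℕ) + 1)) • u with hp_def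
  have hpnorm : ∀ i : Fin (C + 1), ‖p i‖ = 3 * δ * ((i : ℕ) + 1) := by
    intro i
    rw [hp_def, norm_smul, hu, mul_one, Real.norm_eq_abs, abs_of_pos]
    positivity
  have hpbound : ∀ i : Fin (C + 1), ‖p i‖ ≤ δ * (3 * C + 3) := by
    intro i
    rw [hpnorm i]
    have : ((i : ℕ) : ℝ) ≤ (C : ℝ) := by
      exact_mod_cast Nat.lt_succ_iff.mp i.2
    nlinarith
  have hainv : (1 : ℝ) < 1 / a := by
    rw [lt_div_iff₀ ha0]
    nlinarith
  have hq : ∀ i : Fin (C + 1), ∃ y ∈ affAct (g n) '' Y, dist (p i) y < a := by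
    intro i
    have hmem : p i ∈ (univ : Set (EuclideanSpace ℝ (Fin d))) ∩ ball 0 (1 / a) := by
      refine ⟨trivial, ?_⟩
      rw [mem_ball, dist_zero_right]
      calc ‖p i‖ ≤ δ * (3 * C + 3) := hpbound i
        _ < δ * (3 * C + 4) := by nlinarith
        _ ≤ 1 := hδ1
        _ < 1 / a := hainv
    exact (Metric.mem_thickening_iff).mp (hcov hmem)
  choose q hqmem hqdist using hq
  -- the q i are in the closed ball
  have hqball : ∀ i, q i ∈ closedBall (0 : EuclideanSpace ℝ (Fin d)) r := by
    intro i
    rw [mem_closedBall, dist_zero_right]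
    have h1 : ‖q i‖ ≤ ‖p i‖ + dist (p i) (q i) := by
      rw [dist_eq_norm]
      calc ‖q i‖ = ‖p i - (p i - q i)‖ := by rw [sub_sub_cancel]
        _ ≤ ‖p i‖ + ‖p i - q i‖ := norm_sub_le _ _
    calc ‖q i‖ ≤ ‖p i‖ + dist (p i) (q i) := h1
      _ ≤ δ * (3 * C + 3) + a := add_le_add (hpbound i) (hqdist i).le
      _ ≤ δ * (3 * C + 3) + δ := by linarith
      _ = δ * (3 * C + 4) := by ring
      _ ≤ r := by rw [hδr]; exact min_le_left _ _
  -- injectivity of q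
  have hpdist : ∀ i j : Fin (C + 1), i ≠ j → 3 * δ ≤ dist (p i) (p j) := by
    intro i j hij
    rw [hp_def, dist_eq_norm, ← sub_smul, norm_smul, hu, mul_one, Real.norm_eq_abs]
    have hsub : ((3 * δ) * ((i : ℕ) + 1)) - ((3 * δ) * ((j : ℕ) + 1)) =
        (3 * δ) * (((i : ℕ) : ℝ) - ((j : ℕ) : ℝ)) := by ring
    rw [hsub, abs_mul, abs_of_pos (by positivity : (0:ℝ) < 3 * δ)]
    have hij' : ((i : ℕ) : ℝ) ≠ ((j : ℕ) : ℝ) := by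
      simp only [ne_eq, Nat.cast_inj]
      exact fun hh => hij (Fin.ext hh)
    have : (1 : ℝ) ≤ |((i : ℕ) : ℝ) - ((j : ℕ) : ℝ)| := by
      have hij2 : ((i : ℕ) : ℤ) ≠ ((j : ℕ) : ℤ) := by exact_mod_cast hij'
      have h1 : (1 : ℤ) ≤ |((i : ℕ) : ℤ) - ((j : ℕ) : ℤ)| :=
        Int.one_le_abs (sub_ne_zero.mpr hij2)
      exact_mod_cast h1
    nlinarith
  have hqinj : Function.Injective q := by
    intro i j hij
    by_contra hne'
    have h3 : dist (p i) (p j) ≤ dist (p i) (q i) + dist (q j) (p j) := by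
      rw [hij]; exact dist_triangle _ _ _
    have h4 : dist (q j) (p j) < a := by rw [dist_comm]; exact hqdist j
    have := hpdist i j hne'
    have haδ' : a < δ := haδ
    linarith [hqdist i]
  -- count: at least C+1 points in the ball
  have hsubset : Set.range q ⊆ closedBall (0 : EuclideanSpace ℝ (Fin d)) r ∩
      affAct (g n) '' Y := by
    rintro x ⟨i, rfl⟩
    exact ⟨hqball i, hqmem i⟩
  have hcard : (Set.range q).encard = (C + 1 : ℕ) := by
    rw [← Set.image_univ, hqinj.encard_image _, Set.encard_univ]
    simp
  have hle : ((C + 1 : ℕ) : ℕ∞) ≤ (C : ℕ∞) := by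
    rw [← hcard]
    exact le_trans (Set.encard_mono hsubset) (hF n)
  have : C + 1 ≤ C := by exact_mod_cast hle
  omega
end

section
/- A closed set Y ⊆ R^d satisfies ∅ ∉ closure(G0.Y) (in the Chabauty-Fell topology) if and only if there exists r > 0 such that Y ∩ g.closure(B(0,r)) ≠ ∅ for every g ∈ G0. -/
open Metric Set Filter

lemma CF_bddBelow {d : ℕ} (F₁ F₂ : Set (EuclideanSpace ℝ (Fin d))) :
    BddBelow ({ε : ℝ | 0 < ε ∧ F₁ ∩ ball 0 (1/ε) ⊆ thickening ε F₂ ∧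
      F₂ ∩ ball 0 (1/ε) ⊆ thickening ε F₁} ∪ {1}) := by
  refine ⟨0, ?_⟩
  rintro ε (⟨hε, -, -⟩ | rfl)
  · exact hε.le
  · exact zero_le_one

lemma CF_nonneg {d : ℕ} (F₁ F₂ : Set (EuclideanSpace ℝ (Fin d))) : 0 ≤ CF F₁ F₂ := by
  refine le_csInf ⟨1, Or.inr rfl⟩ ?_
  rintro ε (⟨hε, -, -⟩ | rfl)
  · exact hε.le
  · exact zero_le_one

lemma CF_empty_le {d : ℕ} (F : Set (EuclideanSpace ℝ (Fin d))) {ε : ℝ} (hε : 0 < ε)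
    (h : F ∩ ball 0 (1/ε) = ∅) : CF F ∅ ≤ ε := by
  refine csInf_le (CF_bddBelow F ∅) (Or.inl ⟨hε, ?_, ?_⟩)
  · rw [h]; exact empty_subset _
  · simp

lemma CF_empty_lt {d : ℕ} {F : Set (EuclideanSpace ℝ (Fin d))} {ε : ℝ} (hε1 : ε ≤ 1)
    (h : CF F ∅ < ε) : ∃ ε', 0 < ε' ∧ ε' < ε ∧ F ∩ ball 0 (1/ε') = ∅ := by
  unfold CF at h
  have hne : ({ε : ℝ | 0 < ε ∧ F ∩ ball 0 (1/ε) ⊆ thickening ε (∅ : Set (EuclideanSpace ℝ (Fin d))) ∧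
      (∅ : Set (EuclideanSpace ℝ (Fin d))) ∩ ball 0 (1/ε) ⊆ thickening ε F} ∪ {1}).Nonempty :=
    ⟨1, Or.inr rfl⟩
  obtain ⟨ε', hmem, hlt⟩ := exists_lt_of_csInf_lt hne h
  rcases hmem with ⟨hpos, hsub, -⟩ | rfl
  · refine ⟨ε', hpos, hlt, ?_⟩
    rw [← subset_empty_iff]
    simpa using hsub
  · linarith

/-- A closed set `Y ⊆ ℝ^d` satisfies `∅ ∉ closure(G₀.Y)` (Chabauty–Fell, sequentially) iff
there is `r > 0` with `Y ∩ g.closure(B(0,r)) ≠ ∅` for every `g ∈ G₀`. -/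
theorem empty_not_in_closure_iff {d : ℕ}
    (G₀ : Subgroup (EuclideanSpace ℝ (Fin d) ≃ᵃ[ℝ] EuclideanSpace ℝ (Fin d)))
    (Y : Set (EuclideanSpace ℝ (Fin d))) (hY : IsClosed Y) :
    (¬ ∃ g : ℕ → G₀,
      Tendsto (fun n => CF (⇑(g n : EuclideanSpace ℝ (Fin d) ≃ᵃ[ℝ] EuclideanSpace ℝ (Fin d)) '' Y)
        (∅ : Set (EuclideanSpace ℝ (Fin d)))) atTop (nhds 0)) ↔
    ∃ r : ℝ, 0 < r ∧ ∀ g ∈ G₀, (Y ∩ ⇑g '' closedBall 0 r).Nonempty := by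
  constructor
  · intro h
    by_contra hr
    push_neg at hr
    apply h
    have key : ∀ n : ℕ, ∃ gn : G₀,
        (⇑(gn : EuclideanSpace ℝ (Fin d) ≃ᵃ[ℝ] EuclideanSpace ℝ (Fin d)) '' Y)
          ∩ ball 0 ((n : ℝ) + 1) = ∅ := by
      intro n
      obtain ⟨g, hg, hempty⟩ := hr ((n : ℝ) + 1) (by positivity)
      refine ⟨⟨g⁻¹, G₀.inv_mem hg⟩, ?_⟩
      rw [eq_empty_iff_forall_notMem]
      rintro x ⟨⟨y, hy, rfl⟩, hxb⟩
      rw [eq_empty_iff_forall_notMem] at hempty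
      refine hempty y ⟨hy, ?_⟩
      refine ⟨g⁻¹ y, ball_subset_closedBall hxb, ?_⟩
      simp [AffineEquiv.inv_def]
    choose g hg using key
    refine ⟨g, ?_⟩
    have h1 : ∀ n : ℕ, CF (⇑(g n : EuclideanSpace ℝ (Fin d) ≃ᵃ[ℝ] EuclideanSpace ℝ (Fin d)) '' Y)
        ∅ ≤ 1 / ((n : ℝ) + 1) := by
      intro n
      refine CF_empty_le _ (by positivity) ?_
      rw [one_div_one_div]
      exact hg n
    have h0 : ∀ n : ℕ, 0 ≤ CF (⇑(g n : EuclideanSpace ℝ (Fin d) ≃ᵃ[ℝ] EuclideanSpace ℝ (Fin d)) '' Y)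
        ∅ := fun n => CF_nonneg _ _
    refine squeeze_zero h0 h1 ?_
    exact tendsto_one_div_add_atTop_nhds_zero_nat
  · rintro ⟨r, hrpos, hall⟩ ⟨g, hg⟩
    set ε₀ : ℝ := min (1/2) (1/(r+1)) with hε₀def
    have hε₀pos : 0 < ε₀ := lt_min (by norm_num) (by positivity)
    have hε₀1 : ε₀ ≤ 1 := le_trans (min_le_left _ _) (by norm_num)
    have := (hg.eventually (eventually_lt_nhds hε₀pos)).exists
    obtain ⟨n, hn⟩ := this
    obtain ⟨ε', hε'pos, hε'lt, hball⟩ := CF_empty_lt hε₀1 hn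
    have hrε' : r < 1/ε' := by
      have h1 : ε' < 1/(r+1) := lt_of_lt_of_le hε'lt (min_le_right _ _)
      have h2 : r + 1 < 1/ε' := by
        rw [lt_div_iff₀ hε'pos]
        rw [lt_div_iff₀ (by positivity)] at h1
        linarith [mul_comm ε' (r+1)]
      linarith
    -- Y ∩ (g n)⁻¹ '' closedBall 0 r is nonempty
    set e : EuclideanSpace ℝ (Fin d) ≃ᵃ[ℝ] EuclideanSpace ℝ (Fin d) := ↑(g n)
    obtain ⟨y, hyY, x, hx, hxy⟩ := hall (e⁻¹) (G₀.inv_mem (g n).2)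
    rw [eq_empty_iff_forall_notMem] at hball
    refine hball (e y) ⟨⟨y, hyY, rfl⟩, ?_⟩
    have : e y = x := by
      rw [← hxy]; simp [AffineEquiv.inv_def]
    rw [this]
    exact closedBall_subset_ball hrε' hx
end

section
/- For r > 0 and x ∈ R^d with ‖x‖ > r, there exists a closed centered ellipsoid E(r,x) containing the ball B(0,r) and the point x, with Vol(E(r,x)) = β_d · r^{d-1} · ‖x‖, where β_d is the volume of the unit ball in R^d. -/
open Metric MeasureTheory Set Matrix
open scoped RealInnerProductSpace

/-- Determinant of `w ↦ r • w + (c * ⟪u,w⟫) • u` for a unit vector `u`. -/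
lemma det_aux_centered_ellipsoid {d : ℕ} (hd : 1 ≤ d) (r c : ℝ) (hr : 0 < r)
    (u : EuclideanSpace ℝ (Fin d))
    (f : EuclideanSpace ℝ (Fin d) →ₗ[ℝ] EuclideanSpace ℝ (Fin d))
    (hfapp : ∀ w, f w = r • w + (c * ⟪u, w⟫) • u) (huu : ⟪u,u⟫ = 1) :
    LinearMap.det f = r ^ (d-1) * (r + c) := by
  rw [← LinearMap.det_toMatrix (PiLp.basisFun 2 ℝ (Fin d))]
  have hM : LinearMap.toMatrix (PiLp.basisFun 2 ℝ (Fin d)) (PiLp.basisFun 2 ℝ (Fin d)) f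
      = r • ((1 : Matrix (Fin d) (Fin d) ℝ)
          + Matrix.replicateCol (Fin 1) (WithLp.ofLp ((c/r) • u) : Fin d → ℝ)
            * Matrix.replicateRow (Fin 1) (WithLp.ofLp u : Fin d → ℝ)) := by
    ext i j
    rw [LinearMap.toMatrix_apply]
    have h2 : ⟪u, (PiLp.basisFun 2 ℝ (Fin d)) j⟫ = u j := by
      rw [PiLp.basisFun_apply]
      simp [EuclideanSpace.inner_single_right]
    erw [hfapp, h2, ← Matrix.vecMulVec_eq, PiLp.basisFun_repr]
    have hL : (r • (PiLp.basisFun 2 ℝ (Fin d)) j + (c * u j) • u) i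
        = r * ((PiLp.basisFun 2 ℝ (Fin d)) j i) + (c * u j) * u i := rfl
    rw [hL, PiLp.basisFun_apply]
    have hR : (r • ((1 : Matrix (Fin d) (Fin d) ℝ) + Matrix.vecMulVec ((c/r) • u) u)) i j
        = r * ((if i = j then 1 else 0) + (c/r) * u i * u j) := by
      simp [Matrix.vecMulVec_apply, Matrix.one_apply, mul_comm]
      exact Or.inl (by ring)
    rw [hR]
    rcases eq_or_ne i j with h | h
    · subst h
      simp only [PiLp.ofLp_single, Pi.single_apply, if_pos rfl, ↓reduceIte]
      field_simp
    · have hji : ¬ (j = i) := fun hh => h hh.symm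
      simp only [PiLp.ofLp_single, Pi.single_apply, if_neg hji, if_neg h]
      field_simp
  erw [hM, Matrix.det_smul, Matrix.det_one_add_replicateCol_mul_replicateRow]
  have hdot : u ⬝ᵥ ((c/r) • u) = c / r := by
    have h : u ⬝ᵥ ((c/r) • u) = (c/r) * ⟪u, u⟫ := by
      simp only [dotProduct, PiLp.inner_apply, RCLike.inner_apply, conj_trivial,
        Finset.mul_sum, Pi.smul_apply, smul_eq_mul, PiLp.smul_apply]
      exact Finset.sum_congr rfl (fun _ _ => by ring)
    rw [h, huu, mul_one]
  rw [WithLp.ofLp_smul, hdot, Fintype.card_fin]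
  have hd1 : d = (d-1) + 1 := (Nat.succ_pred_eq_of_pos hd).symm
  rw [hd1, pow_succ]
  field_simp
  ring
  simp only [Nat.add_sub_cancel_left]

/-- For `r > 0` and `x` with `‖x‖ > r` there is a closed centered ellipsoid (image of the
closed unit ball under an invertible linear map) containing `B(0,r)` and `x`, of volume
`β_d · r^{d-1} · ‖x‖` where `β_d` is the volume of the unit ball. -/
theorem exists_centered_ellipsoid {d : ℕ} (hd : 1 ≤ d) (r : ℝ) (hr : 0 < r)
    (x : EuclideanSpace ℝ (Fin d)) (hx : r < ‖x‖) :
    ∃ E : Set (EuclideanSpace ℝ (Fin d)),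
      (∃ L : EuclideanSpace ℝ (Fin d) ≃ₗ[ℝ] EuclideanSpace ℝ (Fin d),
        E = ⇑L '' closedBall 0 1) ∧
      closedBall 0 r ⊆ E ∧ x ∈ E ∧
      volume E = volume (closedBall (0 : EuclideanSpace ℝ (Fin d)) 1) *
        ENNReal.ofReal (r ^ (d - 1) * ‖x‖) := by
  have hX0 : (0:ℝ) < ‖x‖ := lt_trans hr hx
  set X : ℝ := ‖x‖ with hXdef
  have hXne : X ≠ 0 := ne_of_gt hX0
  have hrne : r ≠ 0 := ne_of_gt hr
  obtain ⟨u, hu, hux⟩ : ∃ u : EuclideanSpace ℝ (Fin d), ‖u‖ = 1 ∧ X • u = x := by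
    refine ⟨X⁻¹ • x, ?_, ?_⟩
    · rw [norm_smul, norm_inv, Real.norm_eq_abs, abs_of_pos hX0]
      field_simp
      exact hXdef.symm
    · rw [smul_smul]; field_simp; exact one_smul ℝ x
  have huu : ⟪u, u⟫ = 1 := by
    rw [real_inner_self_eq_norm_sq, hu]; norm_num
  set c : ℝ := X - r with hcdef
  obtain ⟨f, hfapp⟩ : ∃ f : EuclideanSpace ℝ (Fin d) →ₗ[ℝ] EuclideanSpace ℝ (Fin d),
      ∀ w, f w = r • w + (c * ⟪u, w⟫) • u := by
    refine ⟨r • LinearMap.id + c • ((innerSL ℝ u).smulRight u).toLinearMap, fun w => ?_⟩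
    simp
    rw [smul_smul]
  have hdet : LinearMap.det f = r ^ (d-1) * X := by
    rw [det_aux_centered_ellipsoid hd r c hr u f hfapp huu, hcdef]
    ring_nf
  have hdetpos : 0 < r ^ (d-1) * X := by positivity
  have hdetne : LinearMap.det f ≠ 0 := by rw [hdet]; exact ne_of_gt hdetpos
  set L : EuclideanSpace ℝ (Fin d) ≃ₗ[ℝ] EuclideanSpace ℝ (Fin d) :=
    f.equivOfDetNeZero hdetne with hLdef
  have hLcoe : ⇑L = ⇑f := rfl
  have hLapp : ∀ w, L w = f w := fun w => congrFun hLcoe w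
  refine ⟨⇑L '' closedBall 0 1, ⟨L, rfl⟩, ?_, ?_, ?_⟩
  · -- closedBall 0 r ⊆ E
    intro w hw
    rw [mem_closedBall_zero_iff] at hw
    obtain ⟨t, htdef⟩ : ∃ t : ℝ, t = ⟪u, w⟫ := ⟨_, rfl⟩
    obtain ⟨v, hvdef⟩ : ∃ v : EuclideanSpace ℝ (Fin d),
      v = r⁻¹ • (w - t • u) + (t / X) • u := ⟨_, rfl⟩
    have hperp : ⟪u, w - t • u⟫ = 0 := by
      rw [inner_sub_right, real_inner_smul_right, huu, htdef]; ring
    have huv : ⟪u, v⟫ = t / X := by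
      rw [hvdef, inner_add_right, real_inner_smul_right, real_inner_smul_right, hperp, huu]
      ring
    have hfv : f v = w := by
      rw [hfapp, huv, hvdef, hcdef]
      match_scalars <;> field_simp <;> ring
    have hvnorm : ‖v‖ ≤ 1 := by
      have h1 : ‖v‖^2 = ‖r⁻¹ • (w - t • u)‖^2 + ‖(t / X) • u‖^2 := by
        rw [hvdef, norm_add_sq_real]
        have hz : ⟪r⁻¹ • (w - t • u), (t / X) • u⟫ = 0 := by
          rw [real_inner_smul_left, real_inner_smul_right, real_inner_comm, hperp]; ring
        rw [hz]; ring
      have h2 : ‖w‖^2 = ‖w - t • u‖^2 + t^2 := by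
        have hw' : w = (w - t • u) + t • u := by abel
        calc ‖w‖^2 = ‖(w - t • u) + t • u‖^2 := by rw [← hw']
          _ = ‖w - t • u‖^2 + 2 * ⟪w - t • u, t • u⟫ + ‖t • u‖^2 := norm_add_sq_real _ _
          _ = ‖w - t • u‖^2 + t^2 := by
              rw [real_inner_smul_right, real_inner_comm, hperp, norm_smul, hu]
              simp [Real.norm_eq_abs, sq_abs]
      have h3 : ‖r⁻¹ • (w - t • u)‖^2 = r⁻¹^2 * ‖w - t • u‖^2 := by
        rw [norm_smul, mul_pow, Real.norm_eq_abs, sq_abs]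
      have h4 : ‖(t / X) • u‖^2 = t^2 / X^2 := by
        rw [norm_smul, mul_pow, hu, Real.norm_eq_abs, sq_abs]
        field_simp
      have h5 : ‖v‖^2 ≤ 1 := by
        rw [h1, h3, h4]
        have hwt : ‖w - t • u‖^2 = ‖w‖^2 - t^2 := by linarith
        rw [hwt]
        have hXr : r ≤ X := le_of_lt hx
        have ht2 : t^2 / X^2 ≤ t^2 / r^2 := by
          apply div_le_div_of_nonneg_left (sq_nonneg t) (by positivity)
          exact pow_le_pow_left₀ (le_of_lt hr) hXr 2
        have hkey : r⁻¹^2 * (‖w‖^2 - t^2) + t^2/r^2 ≤ 1 := by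
          rw [inv_pow, inv_eq_one_div, div_mul_eq_mul_div, ← add_div, one_mul]
          rw [div_le_one (by positivity)]
          nlinarith [norm_nonneg w, hw]
        linarith
      exact (pow_le_one_iff_of_nonneg (norm_nonneg v) (by norm_num)).1 h5
    exact ⟨v, mem_closedBall_zero_iff.2 hvnorm, by rw [hLapp, hfv]⟩
  · -- x ∈ E
    refine ⟨u, mem_closedBall_zero_iff.2 (le_of_eq hu), ?_⟩
    rw [hLapp, hfapp, huu, mul_one, ← add_smul, hcdef]
    rw [show r + (X - r) = X by ring, hux]
  · -- volume
    rw [hLcoe, Measure.addHaar_image_linearMap, hdet,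
      abs_of_pos hdetpos, mul_comm]
end

section
/- If Y ⊆ R^d (d ≥ 1) is a Danzer set, then for every n ∈ N and every ε > 0 there is an ellipsoid E with Vol(E) < ε and #(E ∩ Y) ≥ n. -/
open Metric MeasureTheory Set

namespace NoGowersAux

noncomputable section

variable {e : ℕ}

local notation "Eu" => EuclideanSpace ℝ (Fin (e + 2))

abbrev last' (e : ℕ) : Fin (e + 2) := Fin.last (e + 1)

lemma zero_ne_last : (0 : Fin (e+2)) ≠ last' e := by
  simp [last', Fin.ext_iff]

/-- the sheared diagonal map, coordinates. -/
def gfun (r c : Fin (e+2) → ℝ) (x : Eu) : Eu :=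
  (WithLp.equiv 2 _).symm fun i => r i * x i + (r (last' e) * x (last' e)) * c i

def gifun (r c : Fin (e+2) → ℝ) (u : Eu) : Eu :=
  (WithLp.equiv 2 _).symm fun i => (u i - c i * u (last' e)) / r i

lemma gfun_apply (r c : Fin (e+2) → ℝ) (x : Eu) (i : Fin (e+2)) :
    gfun r c x i = r i * x i + (r (last' e) * x (last' e)) * c i := rfl

lemma gifun_apply (r c : Fin (e+2) → ℝ) (u : Eu) (i : Fin (e+2)) :
    gifun r c u i = (u i - c i * u (last' e)) / r i := rfl

def gmap (r c : Fin (e+2) → ℝ) (hr : ∀ i, r i ≠ 0) (hc : c (last' e) = 0) :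
    Eu ≃ₗ[ℝ] Eu where
  toFun := gfun r c
  invFun := gifun r c
  map_add' x y := by
    ext i
    simp only [gfun_apply, PiLp.add_apply]
    ring
  map_smul' a x := by
    ext i
    simp only [gfun_apply, PiLp.smul_apply, smul_eq_mul, RingHom.id_apply]
    ring
  left_inv x := by
    show gifun r c (gfun r c x) = x
    have hl : gfun r c x (last' e) = r (last' e) * x (last' e) := by
      rw [gfun_apply, hc]; ring
    ext i
    rw [gifun_apply, hl, gfun_apply]
    have h2 : r i * x i + r (last' e) * x (last' e) * c i - c i * (r (last' e) * x (last' e))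
        = r i * x i := by ring
    rw [h2, mul_div_cancel_left₀ _ (hr i)]
  right_inv u := by
    show gfun r c (gifun r c u) = u
    have hl : gifun r c u (last' e) = u (last' e) / r (last' e) := by
      rw [gifun_apply, hc]; ring
    ext i
    rw [gfun_apply, hl, gifun_apply]
    field_simp [hr i, hr (last' e)]
    ring

lemma gmap_apply (r c : Fin (e+2) → ℝ) (hr : ∀ i, r i ≠ 0) (hc : c (last' e) = 0)
    (x : Eu) (i : Fin (e+2)) :
    gmap r c hr hc x i = r i * x i + (r (last' e) * x (last' e)) * c i := rfl

lemma gmap_symm_apply (r c : Fin (e+2) → ℝ) (hr : ∀ i, r i ≠ 0) (hc : c (last' e) = 0)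
    (u : Eu) (i : Fin (e+2)) :
    (gmap r c hr hc).symm u i = (u i - c i * u (last' e)) / r i := rfl

/-- the same map in the plain pi world. -/
def pimap (r c : Fin (e+2) → ℝ) : (Fin (e+2) → ℝ) →ₗ[ℝ] (Fin (e+2) → ℝ) where
  toFun x := fun i => r i * x i + (r (last' e) * x (last' e)) * c i
  map_add' x y := by funext i; simp [Pi.add_apply]; ring
  map_smul' a x := by funext i; simp [Pi.smul_apply, smul_eq_mul]; ring

lemma det_pimap (r c : Fin (e+2) → ℝ) (hc : c (last' e) = 0) :
    LinearMap.det (pimap r c) = ∏ i, r i := by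
  rw [← LinearMap.det_toMatrix' (pimap r c)]
  have htri : (LinearMap.toMatrix' (pimap r c)).BlockTriangular id := by
    intro i j hij
    simp only [LinearMap.toMatrix'_apply, pimap, LinearMap.coe_mk, AddHom.coe_mk]
    have h1 : (if i = j then (1:ℝ) else 0) = 0 := by
      simp only [ite_eq_right_iff]
      intro h; exact absurd h (by rintro rfl; exact lt_irrefl _ hij)
    have h2 : (if (last' e) = j then (1:ℝ) else 0) = 0 := by
      rw [if_neg]
      rintro rfl
      exact absurd hij (not_lt.mpr (Fin.le_last i))
    simp [Pi.single_apply, h1, h2]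
  rw [Matrix.det_of_upperTriangular htri]
  refine Finset.prod_congr rfl fun i _ => ?_
  simp only [LinearMap.toMatrix'_apply, pimap, LinearMap.coe_mk, AddHom.coe_mk]
  by_cases h : i = last' e
  · subst h; simp [hc]
  · have hne : (if (last' e) = i then (1:ℝ) else 0) = 0 := if_neg (fun hh => h hh.symm)
    simp [Pi.single_apply, hne]

lemma det_gmap (r c : Fin (e+2) → ℝ) (hr : ∀ i, r i ≠ 0) (hc : c (last' e) = 0) :
    LinearMap.det (gmap r c hr hc).toLinearMap = ∏ i, r i := by
  have hconj : (gmap r c hr hc).toLinearMap =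
      ((WithLp.linearEquiv 2 ℝ (Fin (e+2) → ℝ)).symm.toLinearMap.comp
        ((pimap r c).comp (WithLp.linearEquiv 2 ℝ (Fin (e+2) → ℝ)).toLinearMap)) := by
    ext x
    rfl
  rw [hconj, ← det_pimap r c hc]
  exact LinearMap.det_conj (pimap r c) (WithLp.linearEquiv 2 ℝ (Fin (e+2) → ℝ)).symm

lemma abs_coord_le_norm (x : Eu) (i : Fin (e+2)) : |x i| ≤ ‖x‖ := by
  rw [EuclideanSpace.norm_eq]
  have h1 : |x i| = Real.sqrt (|x i| ^ 2) := by
    rw [Real.sqrt_sq (abs_nonneg _)]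
  rw [h1]
  apply Real.sqrt_le_sqrt
  rw [← Real.norm_eq_abs]
  exact Finset.single_le_sum (f := fun j => ‖x j‖ ^ 2)
    (fun j _ => by positivity) (Finset.mem_univ i)

lemma norm_le_one_of_coords (x : Eu)
    (h : ∀ i, |x i| ≤ 1 / Real.sqrt (e+2)) : ‖x‖ ≤ 1 := by
  rw [EuclideanSpace.norm_eq]
  have hsum : ∑ i, ‖x i‖ ^ 2 ≤ 1 := by
    have hbound : ∀ i ∈ Finset.univ, ‖x i‖ ^ 2 ≤ 1 / (e+2) := by
      intro i _
      have := h i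
      have hsq : |x i| ^ 2 ≤ (1 / Real.sqrt (e+2)) ^ 2 := by
        apply sq_le_sq' _ this
        linarith [abs_nonneg (x i), (h i)]
      rw [Real.norm_eq_abs]
      calc |x i| ^ 2 ≤ (1 / Real.sqrt (e+2)) ^ 2 := hsq
        _ = 1 / (e+2) := by
            rw [div_pow, one_pow, Real.sq_sqrt (by positivity)]
    calc ∑ i, ‖x i‖ ^ 2 ≤ ∑ _i : Fin (e+2), (1:ℝ) / (e+2) :=
          Finset.sum_le_sum hbound
      _ = 1 := by
          rw [Finset.sum_const, Finset.card_univ, Fintype.card_fin]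
          rw [nsmul_eq_mul]; push_cast
          field_simp
  calc Real.sqrt (∑ i, ‖x i‖ ^ 2) ≤ Real.sqrt 1 := Real.sqrt_le_sqrt hsum
    _ = 1 := Real.sqrt_one

lemma volume_image_affine (L : Eu ≃ₗ[ℝ] Eu) (v : Eu) (s : Set Eu) :
    volume ((fun x => L x + v) '' s)
      = ENNReal.ofReal |LinearMap.det L.toLinearMap| * volume s := by
  have h : (fun x => L x + v) '' s = (fun x => (-v) + x) ⁻¹' (⇑L.toLinearMap '' s) := by
    ext x
    constructor
    · rintro ⟨b, hb, rfl⟩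
      refine ⟨b, hb, ?_⟩
      show L b = -v + (L b + v)
      rw [add_comm (L b) v, ← add_assoc, neg_add_cancel, zero_add]
    · rintro ⟨b, hb, hbe⟩
      refine ⟨b, hb, ?_⟩
      have hx : L b = -v + x := hbe
      show L b + v = x
      rw [hx, add_comm (-v) x, add_assoc, neg_add_cancel, add_zero]
  rw [h, measure_preimage_add, Measure.addHaar_image_linearMap]

lemma volume_box (lo hi : Fin (e+2) → ℝ) :
    volume {x : Eu | ∀ i, x i ∈ Icc (lo i) (hi i)}
      = ∏ i, ENNReal.ofReal (hi i - lo i) := by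
  have hset : {x : Eu | ∀ i, x i ∈ Icc (lo i) (hi i)}
      = (MeasurableEquiv.toLp 2 (Fin (e+2) → ℝ)).symm ⁻¹'
          (Set.univ.pi fun i => Icc (lo i) (hi i)) := by
    ext x
    simp [Set.mem_pi, Pi.le_def, forall_and]
  rw [hset,
    (EuclideanSpace.volume_preserving_symm_measurableEquiv_toLp (Fin (e+2))).measure_preimage
      ((MeasurableSet.univ_pi fun i => measurableSet_Icc).nullMeasurableSet)]
  rw [volume_pi_pi]
  simp [Real.volume_Icc]

lemma convex_box (lo hi : Fin (e+2) → ℝ) :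
    Convex ℝ {x : Eu | ∀ i, x i ∈ Icc (lo i) (hi i)} := by
  intro x hx y hy a b ha hb hab
  intro i
  have := (convex_Icc (lo i) (hi i)) (hx i) (hy i) ha hb hab
  simpa [PiLp.add_apply, PiLp.smul_apply] using this

lemma closed_box (lo hi : Fin (e+2) → ℝ) :
    IsClosed {x : Eu | ∀ i, x i ∈ Icc (lo i) (hi i)} := by
  have hset : {x : Eu | ∀ i, x i ∈ Icc (lo i) (hi i)}
      = (WithLp.equiv 2 (Fin (e+2) → ℝ)) ⁻¹' (Set.univ.pi fun i => Icc (lo i) (hi i)) := by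
    ext x
    simp [Set.mem_pi, Pi.le_def, forall_and]
  rw [hset]
  exact (isClosed_set_pi fun i _ => isClosed_Icc).preimage (PiLp.continuous_ofLp 2 _)

lemma prod_split (f : Fin (e+2) → ℝ) :
    ∏ i, f i = f (last' e) * (f 0 *
      ∏ i ∈ (Finset.univ.erase (last' e)).erase 0, f i) := by
  rw [← Finset.mul_prod_erase Finset.univ f (Finset.mem_univ (last' e))]
  congr 1
  rw [← Finset.mul_prod_erase _ f
    (Finset.mem_erase.mpr ⟨zero_ne_last, Finset.mem_univ 0⟩)]

lemma card_rest : ((Finset.univ.erase (last' e)).erase 0).card = e := by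
  rw [Finset.card_erase_of_mem
    (Finset.mem_erase.mpr ⟨zero_ne_last, Finset.mem_univ 0⟩),
    Finset.card_erase_of_mem (Finset.mem_univ _)]
  simp

lemma base (Y : Set Eu) (δ : ℝ) (hδ : 0 < δ) :
    ∃ E : Set Eu, IsEllipsoid E ∧ volume E < ENNReal.ofReal δ ∧
      ((0:ℕ) : ℕ∞) ≤ (E ∩ Y).encard := by
  set ω := volume (closedBall (0:Eu) 1) with hω
  have hωtop : ω ≠ ⊤ := measure_closedBall_lt_top.ne
  set W := ω.toReal with hWdef
  have hW0 : 0 ≤ W := ENNReal.toReal_nonneg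
  set ρ := min 1 (δ / (W + 1)) with hρdef
  have hρ0 : 0 < ρ := lt_min one_pos (by positivity)
  have hρ1 : ρ ≤ 1 := min_le_left _ _
  have hr : ∀ i : Fin (e+2), (fun _ : Fin (e+2) => ρ) i ≠ 0 := fun i => ne_of_gt hρ0
  have hc : (fun _ : Fin (e+2) => (0:ℝ)) (last' e) = 0 := rfl
  refine ⟨(fun x => gmap (fun _ => ρ) (fun _ => 0) hr hc x + 0) '' closedBall 0 1,
    ⟨gmap (fun _ => ρ) (fun _ => 0) hr hc, 0, rfl⟩, ?_, by simp⟩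
  rw [volume_image_affine, det_gmap]
  have hprod : (∏ _i : Fin (e+2), ρ) = ρ ^ (e+2) := by
    rw [Finset.prod_const, Finset.card_univ, Fintype.card_fin]
  rw [hprod, ← hω, ← ENNReal.ofReal_toReal hωtop, ← hWdef,
    abs_of_pos (by positivity), ← ENNReal.ofReal_mul (by positivity)]
  rw [ENNReal.ofReal_lt_ofReal_iff hδ]
  have h1 : ρ ^ (e+2) ≤ ρ := pow_le_of_le_one (le_of_lt hρ0) hρ1 (by omega)
  have h2 : ρ ≤ δ / (W+1) := min_le_right _ _
  have h3 : ρ ^ (e+2) * W ≤ (δ / (W+1)) * W := by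
    apply mul_le_mul_of_nonneg_right (le_trans h1 h2) hW0
  have h4 : (δ / (W+1)) * W < δ := by
    rw [div_mul_eq_mul_div, div_lt_iff₀ (by positivity)]
    nlinarith only [hδ, hW0]
  linarith only [h3, h4]

lemma prod_three (a b mm : ℝ) :
    (∏ i : Fin (e+2), (if i = 0 then a else if i = last' e then b else mm))
      = b * (a * mm ^ e) := by
  rw [prod_split]
  have h1 : (if (last' e : Fin (e+2)) = 0 then a else if (last' e : Fin (e+2)) = last' e then b else mm) = b := by
    rw [if_neg (fun h => zero_ne_last h.symm), if_pos rfl]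
  have h2 : (if (0 : Fin (e+2)) = 0 then a else if (0 : Fin (e+2)) = last' e then b else mm) = a :=
    if_pos rfl
  rw [h1, h2]
  congr 1
  congr 1
  have h3 : ∀ i ∈ (Finset.univ.erase (last' e)).erase (0 : Fin (e+2)),
      (if i = 0 then a else if i = last' e then b else mm) = mm := by
    intro i hi
    obtain ⟨hi0, hil⟩ := Finset.mem_erase.mp hi
    obtain ⟨hil', _⟩ := Finset.mem_erase.mp hil
    rw [if_neg hi0, if_neg hil']
  rw [Finset.prod_congr rfl h3, Finset.prod_const, card_rest]

lemma isClosed_image_affine (L : Eu ≃ₗ[ℝ] Eu) (v : Eu) {s : Set Eu} (hs : IsClosed s) :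
    IsClosed ((fun x => L x + v) '' s) := by
  have h : (fun x => L x + v) '' s =
      ((L.toContinuousLinearEquiv.toHomeomorph.trans (Homeomorph.addRight v)) : Eu → Eu) '' s := by
    apply Set.image_congr
    intro x _
    rfl
  rw [h, Homeomorph.isClosed_image]
  exact hs

lemma convex_image_affine (L : Eu ≃ₗ[ℝ] Eu) (v : Eu) {s : Set Eu} (hs : Convex ℝ s) :
    Convex ℝ ((fun x => L x + v) '' s) := by
  have h : (fun x => L x + v) '' s = (fun x => v + x) '' (⇑L.toLinearMap '' s) := by
    rw [Set.image_image]
    apply Set.image_congr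
    intro x _
    exact add_comm (L x) v
  rw [h]
  exact (hs.linear_image L.toLinearMap).translate v

set_option maxHeartbeats 2000000 in
lemma step (Y : Set Eu) (s : ℝ) (hs : 0 < s)
    (hD : ∀ K : Set Eu, IsClosed K → Convex ℝ K → volume K = ENNReal.ofReal s →
      (K ∩ Y).Nonempty)
    (m : ℕ)
    (ih : ∀ δ : ℝ, 0 < δ → ∃ E : Set Eu, IsEllipsoid E ∧
      volume E < ENNReal.ofReal δ ∧ ((m:ℕ) : ℕ∞) ≤ (E ∩ Y).encard)
    (ε1 : ℝ) (hε1 : 0 < ε1) :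
    ∃ E : Set Eu, IsEllipsoid E ∧ volume E < ENNReal.ofReal ε1 ∧
      ((m+1 : ℕ) : ℕ∞) ≤ (E ∩ Y).encard := by
  classical
  set ω := volume (closedBall (0:Eu) 1) with hωdef
  have hωtop : ω ≠ ⊤ := measure_closedBall_lt_top.ne
  have hω0 : ω ≠ 0 := (measure_closedBall_pos volume (0:Eu) one_pos).ne'
  set W := ω.toReal with hWdef
  have hW : 0 < W := ENNReal.toReal_pos hω0 hωtop
  clear_value W
  set Sd := Real.sqrt (e+2) with hSddef
  have hSd1 : 1 ≤ Sd := by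
    rw [hSddef, show (1:ℝ) = Real.sqrt 1 by rw [Real.sqrt_one]]
    apply Real.sqrt_le_sqrt
    push_cast
    linarith
  have hSd0 : 0 < Sd := lt_of_lt_of_le one_pos hSd1
  clear_value Sd
  set C := Sd ^ (e+2) with hCdef
  have hC0 : 0 < C := hCdef ▸ pow_pos hSd0 (e+2)
  clear_value C
  set P2 := (2:ℝ) ^ e with hP2def
  have hP20 : 0 < P2 := hP2def ▸ pow_pos two_pos e
  clear_value P2
  have hCsW : 0 < C * s * W := mul_pos (mul_pos hC0 hs) hW
  set K := 4 + 4 * C * s * W / ε1 with hKdef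
  have hK4 : 4 ≤ K := le_add_of_nonneg_right (div_nonneg (by nlinarith only [hCsW]) hε1.le)
  have hK0 : 0 < K := by linarith only [hK4]
  clear_value K
  have h2CPK : 0 < 2 * C * P2 * K :=
    mul_pos (mul_pos (mul_pos two_pos hC0) hP20) hK0
  set δstar := ε1 / (2 * C * P2 * K) with hδstardef
  have hδstar0 : 0 < δstar := hδstardef ▸ div_pos hε1 h2CPK
  clear_value δstar
  obtain ⟨E0, hE0ell, hE0vol, hE0card⟩ := ih δstar hδstar0
  obtain ⟨Λ, v, rfl⟩ := hE0ell
  set Δ := |LinearMap.det Λ.toLinearMap| with hΔdef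
  have hdetΛ : LinearMap.det Λ.toLinearMap ≠ 0 := (LinearEquiv.isUnit_det' Λ).ne_zero
  have hΔ0 : 0 < Δ := hΔdef ▸ abs_pos.mpr hdetΛ
  have hE0vol' : Δ * W < δstar := by
    have h1 : volume ((fun x => Λ x + v) '' closedBall 0 1) = ENNReal.ofReal (Δ * W) := by
      rw [volume_image_affine, ← hΔdef, ← hωdef, ← ENNReal.ofReal_toReal hωtop, ← hWdef,
        ← ENNReal.ofReal_mul (le_of_lt hΔ0)]
    rw [h1, ENNReal.ofReal_lt_ofReal_iff hδstar0] at hE0vol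
    exact hE0vol
  clear_value Δ
  set L := 2 * s / (Δ * P2 * K) with hLdef
  have hL0 : 0 < L :=
    hLdef ▸ div_pos (by linarith only [hs]) (mul_pos (mul_pos hΔ0 hP20) hK0)
  clear_value L
  have hLKdiv : 0 < L / K := div_pos hL0 hK0
  have h1LK : 0 < 1 + L / K := by linarith only [hLKdiv]
  have hSdLK : 0 < Sd * (1 + L / K) := mul_pos hSd0 h1LK
  have hSdK : 0 < Sd * K := mul_pos hSd0 hK0
  have h2Sd : 0 < 2 * Sd := by linarith only [hSd0]
  -- the Danzer body
  set lo : Fin (e+2) → ℝ :=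
    fun i => if i = 0 then -(L/2) else if i = last' e then K/2 else -1 with hlodef
  set hi : Fin (e+2) → ℝ :=
    fun i => if i = 0 then L/2 else if i = last' e then K else 1 with hhidef
  have hlo0 : lo 0 = -(L/2) := if_pos rfl
  have hhi0 : hi 0 = L/2 := if_pos rfl
  have hlolast : lo (last' e) = K/2 := by
    show (if (last' e : Fin (e+2)) = 0 then -(L/2) else if last' e = last' e then K/2 else -1)
      = K/2
    rw [if_neg (fun hh => zero_ne_last hh.symm), if_pos rfl]
  have hhilast : hi (last' e) = K := by
    show (if (last' e : Fin (e+2)) = 0 then L/2 else if last' e = last' e then K else 1) = K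
    rw [if_neg (fun hh => zero_ne_last hh.symm), if_pos rfl]
  have hlomid : ∀ i : Fin (e+2), i ≠ 0 → i ≠ last' e → lo i = -1 := by
    intro i h0 hl
    show (if i = 0 then -(L/2) else if i = last' e then K/2 else -1) = -1
    rw [if_neg h0, if_neg hl]
  have hhimid : ∀ i : Fin (e+2), i ≠ 0 → i ≠ last' e → hi i = 1 := by
    intro i h0 hl
    show (if i = 0 then L/2 else if i = last' e then K else 1) = 1
    rw [if_neg h0, if_neg hl]
  set Box := {x : Eu | ∀ i, x i ∈ Icc (lo i) (hi i)} with hBoxdef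
  have hBoxvol : volume Box = ENNReal.ofReal (K/2 * (L * P2)) := by
    rw [hBoxdef, volume_box]
    have hlen : ∀ i : Fin (e+2),
        hi i - lo i = if i = 0 then L else if i = last' e then K/2 else 2 := by
      intro i
      by_cases h0 : i = 0
      · subst h0; rw [hlo0, hhi0, if_pos rfl]; ring
      · by_cases hl : i = last' e
        · subst hl; rw [hlolast, hhilast, if_neg h0, if_pos rfl]; ring
        · rw [hlomid i h0 hl, hhimid i h0 hl, if_neg h0, if_neg hl]; ring
    have hnn : ∀ i ∈ Finset.univ, (0:ℝ) ≤ hi i - lo i := by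
      intro i _
      rw [hlen i]
      by_cases h0 : i = 0
      · rw [if_pos h0]; linarith only [hL0]
      · by_cases hl : i = last' e
        · rw [if_neg h0, if_pos hl]; linarith only [hK0]
        · rw [if_neg h0, if_neg hl]; norm_num
    rw [← ENNReal.ofReal_prod_of_nonneg hnn]
    congr 1
    calc ∏ i, (hi i - lo i)
        = ∏ i : Fin (e+2), (if i = 0 then L else if i = last' e then K/2 else 2) :=
          Finset.prod_congr rfl fun i _ => hlen i
      _ = K/2 * (L * 2 ^ e) := prod_three L (K/2) 2
      _ = K/2 * (L * P2) := by rw [hP2def]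
  set B := (fun x => Λ x + v) '' Box with hBdef
  have hBvol : volume B = ENNReal.ofReal s := by
    rw [hBdef, volume_image_affine, hBoxvol, ← hΔdef,
      ← ENNReal.ofReal_mul (le_of_lt hΔ0)]
    congr 1
    rw [hLdef]
    field_simp
  obtain ⟨y, hyB, hyY⟩ := hD B (hBdef ▸ isClosed_image_affine Λ v (hBoxdef ▸ closed_box lo hi))
    (hBdef ▸ convex_image_affine Λ v (hBoxdef ▸ convex_box lo hi)) hBvol
  obtain ⟨y', hy'Box, hy'eq⟩ := hBdef ▸ hyB
  have hy'Box' : ∀ i, y' i ∈ Icc (lo i) (hi i) := by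
    have h := hy'Box
    rw [hBoxdef] at h
    exact h
  -- coordinates of y'
  have hy'0 : |y' 0| ≤ L/2 := by
    have h := hy'Box' 0
    rw [Set.mem_Icc, hlo0, hhi0] at h
    exact abs_le.mpr ⟨by linarith only [h.1], h.2⟩
  have hy'last1 : K/2 ≤ y' (last' e) := by
    have h := hy'Box' (last' e)
    rw [Set.mem_Icc, hlolast] at h
    exact h.1
  have hy'last2 : y' (last' e) ≤ K := by
    have h := hy'Box' (last' e)
    rw [Set.mem_Icc, hhilast] at h
    exact h.2
  have hy'mid : ∀ i : Fin (e+2), i ≠ 0 → i ≠ last' e → |y' i| ≤ 1 := by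
    intro i h0 hl
    have h := hy'Box' i
    rw [Set.mem_Icc, hlomid i h0 hl, hhimid i h0 hl] at h
    exact abs_le.mpr ⟨h.1, h.2⟩
  have hβ0 : 0 < y' (last' e) := by linarith only [hy'last1, hK4]
  -- the shear data
  set c : Fin (e+2) → ℝ :=
    fun i => if i = last' e then 0 else y' i / y' (last' e) with hcdef
  have hc : c (last' e) = 0 := if_pos rfl
  have hcmid : ∀ i : Fin (e+2), i ≠ last' e → c i = y' i / y' (last' e) := by
    intro i hl
    show (if i = last' e then 0 else y' i / y' (last' e)) = y' i / y' (last' e)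
    rw [if_neg hl]
  set r : Fin (e+2) → ℝ :=
    fun i => if i = 0 then Sd * (1 + L/K) else if i = last' e then Sd * K else 2 * Sd with hrdef
  have hr0 : r 0 = Sd * (1 + L/K) := if_pos rfl
  have hrlast : r (last' e) = Sd * K := by
    show (if (last' e : Fin (e+2)) = 0 then Sd * (1 + L/K)
        else if last' e = last' e then Sd * K else 2 * Sd) = Sd * K
    rw [if_neg (fun hh => zero_ne_last hh.symm), if_pos rfl]
  have hrmid : ∀ i : Fin (e+2), i ≠ 0 → i ≠ last' e → r i = 2 * Sd := by
    intro i h0 hl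
    show (if i = 0 then Sd * (1 + L/K) else if i = last' e then Sd * K else 2 * Sd) = 2 * Sd
    rw [if_neg h0, if_neg hl]
  have hrpos : ∀ i, 0 < r i := by
    intro i
    by_cases h0 : i = 0
    · subst h0; rw [hr0]; exact hSdLK
    · by_cases hl : i = last' e
      · subst hl; rw [hrlast]; exact hSdK
      · rw [hrmid i h0 hl]; exact h2Sd
  have hr : ∀ i, r i ≠ 0 := fun i => (hrpos i).ne'
  set g := gmap r c hr hc with hgdef
  set Estar := (fun x => (g.trans Λ) x + v) '' closedBall 0 1 with hEstardef
  have hmem : ∀ w : Eu, ‖g.symm w‖ ≤ 1 → (Λ w + v) ∈ Estar := by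
    intro w hw
    refine ⟨g.symm w, ?_, ?_⟩
    · rwa [mem_closedBall_zero_iff]
    · show Λ (g (g.symm w)) + v = Λ w + v
      rw [LinearEquiv.apply_symm_apply]
  -- bounds on the shear coefficients
  have hcb0 : |c 0| ≤ L/K := by
    rw [hcmid 0 zero_ne_last, abs_div, abs_of_pos hβ0]
    calc |y' 0| / y' (last' e) ≤ (L/2) / (K/2) := by
          apply div_le_div₀ (by linarith only [hL0]) hy'0 (by linarith only [hK0]) hy'last1
      _ = L/K := by
          rw [div_div_div_eq, mul_comm (2:ℝ) K, mul_div_mul_right _ _ two_ne_zero]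
  have hcbmid : ∀ i : Fin (e+2), i ≠ 0 → i ≠ last' e → |c i| ≤ 1 := by
    intro i h0 hl
    rw [hcmid i hl, abs_div, abs_of_pos hβ0]
    calc |y' i| / y' (last' e) ≤ 1 / (K/2) := by
          apply div_le_div₀ (by norm_num) (hy'mid i h0 hl) (by linarith only [hK0]) hy'last1
      _ ≤ 1 := by
          rw [div_le_one (by linarith only [hK0])]
          linarith only [hK4]
  -- all old points lie in Estar
  have hpoints : ∀ p' : Eu, ‖p'‖ ≤ 1 → ‖g.symm p'‖ ≤ 1 := by
    intro p' hp'
    have hco : ∀ i, |p' i| ≤ 1 := fun i => le_trans (abs_coord_le_norm p' i) hp'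
    apply norm_le_one_of_coords
    intro i
    rw [hgdef]
    rw [gmap_symm_apply, ← hSddef, abs_div, abs_of_pos (hrpos i)]
    by_cases h0 : i = 0
    · subst h0
      have hnum : |p' 0 - c 0 * p' (last' e)| ≤ 1 + L/K := by
        calc |p' 0 - c 0 * p' (last' e)| ≤ |p' 0| + |c 0 * p' (last' e)| := abs_sub _ _
          _ ≤ 1 + L/K := by
              rw [abs_mul]
              have h2 := mul_le_mul hcb0 (hco (last' e)) (abs_nonneg _) hLKdiv.le
              have h3 := hco 0
              linarith only [h2, h3]
      rw [hr0, div_le_div_iff₀ hSdLK hSd0]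
      have h4 := mul_le_mul_of_nonneg_right hnum hSd0.le
      linarith only [h4]
    · by_cases hl : i = last' e
      · subst hl
        rw [hrlast, hc]
        simp only [zero_mul, sub_zero]
        rw [div_le_div_iff₀ hSdK hSd0]
        have h4 := mul_le_mul_of_nonneg_right (hco (last' e)) hSd0.le
        have h5 := mul_nonneg hSd0.le (by linarith only [hK4] : (0:ℝ) ≤ K - 1)
        linarith only [h4, h5]
      · rw [hrmid i h0 hl]
        have hnum : |p' i - c i * p' (last' e)| ≤ 2 := by
          calc |p' i - c i * p' (last' e)| ≤ |p' i| + |c i * p' (last' e)| := abs_sub _ _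
            _ ≤ 1 + 1 := by
                rw [abs_mul]
                have h2 := mul_le_mul (hcbmid i h0 hl) (hco (last' e)) (abs_nonneg _)
                  (by norm_num : (0:ℝ) ≤ 1)
                have h3 := hco i
                linarith only [h2, h3]
            _ = 2 := by norm_num
        rw [div_le_div_iff₀ h2Sd hSd0]
        have h4 := mul_le_mul_of_nonneg_right hnum hSd0.le
        linarith only [h4]
  -- y lies in Estar
  have hy'mem : ‖g.symm y'‖ ≤ 1 := by
    apply norm_le_one_of_coords
    intro i
    rw [hgdef, gmap_symm_apply, ← hSddef]
    by_cases hl : i = last' e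
    · subst hl
      rw [hrlast, hc]
      simp only [zero_mul, sub_zero]
      rw [abs_div, abs_of_pos hβ0, abs_of_pos hSdK, div_le_div_iff₀ hSdK hSd0]
      have h4 := mul_le_mul_of_nonneg_right hy'last2 hSd0.le
      linarith only [h4]
    · have hnum : y' i - c i * y' (last' e) = 0 := by
        rw [hcmid i hl]
        field_simp
        ring
      rw [hnum, zero_div, abs_zero]
      exact le_of_lt (div_pos one_pos hSd0)
  -- gather the m+1 points
  obtain ⟨P, hPsub, hPcard⟩ := Set.exists_subset_encard_eq hE0card
  have hyP : y ∉ P := by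
    intro hyP
    obtain ⟨b, hb, hbe⟩ := (hPsub hyP).1
    have hby' : b = y' := by
      apply Λ.injective
      have h1 : Λ b + v = y := hbe
      have h2 : Λ y' + v = y := hy'eq
      exact add_right_cancel (h1.trans h2.symm)
    have hb1 : ‖b‖ ≤ 1 := mem_closedBall_zero_iff.mp hb
    have h4 := le_trans (abs_coord_le_norm b (last' e)) hb1
    rw [hby'] at h4
    have h5 : y' (last' e) ≤ 1 := le_trans (le_abs_self _) h4
    linarith only [h5, hy'last1, hK4]
  have hEstarY : insert y P ⊆ Estar ∩ Y := by
    intro z hz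
    rcases Set.mem_insert_iff.mp hz with hz | hz
    · subst hz
      exact ⟨hy'eq ▸ hmem y' hy'mem, hyY⟩
    · obtain ⟨p', hp'ball, hp'eq⟩ := (hPsub hz).1
      exact ⟨hp'eq ▸ hmem p' (hpoints p' (mem_closedBall_zero_iff.mp hp'ball)),
        (hPsub hz).2⟩
  refine ⟨Estar, ⟨g.trans Λ, v, hEstardef⟩, ?_, ?_⟩
  · -- volume bound
    rw [hEstardef, volume_image_affine]
    have hdet : LinearMap.det (g.trans Λ).toLinearMap
        = LinearMap.det Λ.toLinearMap * LinearMap.det g.toLinearMap := by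
      have h1 : (g.trans Λ).toLinearMap = Λ.toLinearMap.comp g.toLinearMap := rfl
      rw [h1, LinearMap.det_comp]
    have hdetg : LinearMap.det g.toLinearMap = ∏ i, r i := by
      rw [hgdef]; exact det_gmap r c hr hc
    have hprodr : ∏ i, r i = Sd * K * (Sd * (1 + L/K) * (2*Sd) ^ e) := by
      have heq : ∀ i ∈ Finset.univ, r i
          = (if i = 0 then Sd * (1 + L/K) else if i = last' e then Sd * K else 2 * Sd) := by
        intro i _
        by_cases h0 : i = 0
        · subst h0; rw [hr0, if_pos rfl]
        · by_cases hl : i = last' e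
          · subst hl; rw [hrlast, if_neg h0, if_pos rfl]
          · rw [hrmid i h0 hl, if_neg h0, if_neg hl]
      rw [Finset.prod_congr rfl heq]
      exact prod_three (Sd * (1 + L/K)) (Sd * K) (2*Sd)
    have hprodr_pos : 0 < ∏ i, r i := Finset.prod_pos fun i _ => hrpos i
    rw [hdet, hdetg, abs_mul, ← hΔdef, abs_of_pos (hprodr ▸ hprodr_pos), hprodr]
    rw [← hωdef, ← ENNReal.ofReal_toReal hωtop, ← hWdef,
      ← ENNReal.ofReal_mul (by positivity)]
    rw [ENNReal.ofReal_lt_ofReal_iff hε1]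
    -- real arithmetic
    have hKne : K ≠ 0 := hK0.ne'
    have hLK : Δ * L = 2 * s / (P2 * K) := by
      rw [hLdef]
      field_simp
    have hexp : Δ * (Sd * K * (Sd * (1 + L/K) * (2*Sd) ^ e)) * W
        = C * P2 * K * (Δ * W) + C * P2 * (Δ * L) * W := by
      rw [hCdef, hP2def, mul_pow]
      field_simp
      ring
    rw [hexp]
    have hterm1 : C * P2 * K * (Δ * W) < ε1 / 2 := by
      have h := mul_lt_mul_of_pos_left hE0vol'
        (mul_pos (mul_pos hC0 hP20) hK0 : (0:ℝ) < C * P2 * K)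
      calc C * P2 * K * (Δ * W) < C * P2 * K * δstar := h
        _ = ε1 / 2 := by
            rw [hδstardef]
            field_simp
    have hterm2 : C * P2 * (Δ * L) * W ≤ ε1 / 2 := by
      rw [hLK]
      have h1 : C * P2 * (2 * s / (P2 * K)) * W = 2 * C * s * W / K := by
        field_simp
      rw [h1, div_le_iff₀ hK0]
      have h2 : ε1 * K = 4 * ε1 + 4 * C * s * W := by
        rw [hKdef]
        field_simp
      linarith only [h2, hε1]
    linarith only [hterm1, hterm2]
  · -- cardinality bound
    have hcard : (insert y P).encard = ((m+1 : ℕ) : ℕ∞) := by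
      rw [Set.encard_insert_of_notMem hyP, hPcard]
      push_cast
      rfl
    rw [← hcard]
    exact Set.encard_le_encard hEstarY

end

end NoGowersAux


/-- If `Y ⊆ ℝ^d` is a Danzer set, then for every `n` and `ε > 0` there is an ellipsoid of
volume less than `ε` containing at least `n` points of `Y`. -/
theorem no_gowers_danzer_set {d : ℕ} (hd : 2 ≤ d) (Y : Set (EuclideanSpace ℝ (Fin d)))
    (hDanzer : ∃ s : ℝ, 0 < s ∧ ∀ K : Set (EuclideanSpace ℝ (Fin d)), IsClosed K →
      Convex ℝ K → volume K = ENNReal.ofReal s → (K ∩ Y).Nonempty)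
    (n : ℕ) (ε : ℝ) (hε : 0 < ε) :
    ∃ E : Set (EuclideanSpace ℝ (Fin d)), IsEllipsoid E ∧
      volume E < ENNReal.ofReal ε ∧ (n : ℕ∞) ≤ (E ∩ Y).encard := by
  obtain ⟨e, rfl⟩ : ∃ e, d = e + 2 := ⟨d - 2, by omega⟩
  obtain ⟨s, hs, hD⟩ := hDanzer
  have H : ∀ m : ℕ, ∀ δ : ℝ, 0 < δ → ∃ E : Set (EuclideanSpace ℝ (Fin (e+2))),
      IsEllipsoid E ∧ volume E < ENNReal.ofReal δ ∧ ((m:ℕ) : ℕ∞) ≤ (E ∩ Y).encard := by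
    intro m
    induction m with
    | zero => exact fun δ hδ => NoGowersAux.base Y δ hδ
    | succ m ih => exact fun δ hδ => NoGowersAux.step Y s hs hD m ih δ hδ
  exact H n ε hε
end
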